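/- arXiv:0709.1190 — 9 statements merged into one kernel-verified Lean document; each statement's English description precedes it below -/
import Mathlib

section
/- Let M* be the unique minimum weight perfect b-matching of G and let (y*, λ*) be an optimal dual solution. If C = (j_1, j_2, …, j_{2ℓ}, j_1) is a simple cycle of even length whose edges alternate between M* and its complement, then there exists an edge {i,j} of C with w_ij ≠ y*_i + y*_j. -/
set_option autoImplicit false

open Finset

variable {V : Type*}

/-- The degree of vertex `i` in the edge set `M`. -/
def degIn [DecidableEq V] (M : Finset (Sym2 V)) (i : V) : ℕ :=
  (M.filter (fun e => i ∈ e)).card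

/-- `M` is a perfect b-matching of `G`. -/
def IsPerfectBMatching [Fintype V] [DecidableEq V] (G : SimpleGraph V) [DecidableRel G.Adj]
    (b : V → ℕ) (M : Finset (Sym2 V)) : Prop :=
  M ⊆ G.edgeFinset ∧ ∀ i, degIn M i = b i

/-- Total weight of an edge set. -/
noncomputable def matchWeight (w : Sym2 V → ℝ) (M : Finset (Sym2 V)) : ℝ :=
  ∑ e ∈ M, w e

/-- The 0-1 incidence vector of an edge set. -/
def indic [DecidableEq V] (M : Finset (Sym2 V)) : Sym2 V → ℝ :=
  fun e => if e ∈ M then 1 else 0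

/-- Feasibility for the LP relaxation of the minimum weight perfect b-matching problem. -/
def LPFeasible [Fintype V] [DecidableEq V] (G : SimpleGraph V) [DecidableRel G.Adj]
    (b : V → ℕ) (x : Sym2 V → ℝ) : Prop :=
  (∀ e, e ∉ G.edgeFinset → x e = 0) ∧
  (∀ e ∈ G.edgeFinset, 0 ≤ x e ∧ x e ≤ 1) ∧
  (∀ i, ∑ e ∈ G.edgeFinset.filter (fun e => i ∈ e), x e = (b i : ℝ))

/-- LP objective value `∑ w_e x_e`. -/
noncomputable def LPCost [Fintype V] [DecidableEq V] (G : SimpleGraph V) [DecidableRel G.Adj]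
    (w : Sym2 V → ℝ) (x : Sym2 V → ℝ) : ℝ :=
  ∑ e ∈ G.edgeFinset, w e * x e

/-- Feasibility of the dual LP: `y i + y j ≤ w_{ij} + λ_{ij}` on edges and `λ ≥ 0`. -/
def DualFeasible [Fintype V] [DecidableEq V] (G : SimpleGraph V) [DecidableRel G.Adj]
    (w : Sym2 V → ℝ) (y : V → ℝ) (lam : Sym2 V → ℝ) : Prop :=
  (∀ i j, G.Adj i j → y i + y j ≤ w s(i, j) + lam s(i, j)) ∧
  (∀ e ∈ G.edgeFinset, 0 ≤ lam e)

/-- Dual LP objective `∑_i b_i y_i − ∑_e λ_e`. -/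
noncomputable def DualObj [Fintype V] [DecidableEq V] (G : SimpleGraph V) [DecidableRel G.Adj]
    (b : V → ℕ) (y : V → ℝ) (lam : Sym2 V → ℝ) : ℝ :=
  (∑ i, (b i : ℝ) * y i) - ∑ e ∈ G.edgeFinset, lam e

/-- An alternating walk of length `k` with respect to the edge set `M`:
consecutive vertices are adjacent, consecutive edges alternately belong to `M` and its
complement, and no edge is repeated immediately (`p t ≠ p (t+2)`). -/
def IsAltWalk [DecidableEq V] (G : SimpleGraph V) (M : Finset (Sym2 V))
    (k : ℕ) (p : ℕ → V) : Prop :=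
  (∀ t, t < k → G.Adj (p t) (p (t + 1))) ∧
  (∀ t, t + 1 < k → (s(p t, p (t + 1)) ∈ M ↔ s(p (t + 1), p (t + 2)) ∉ M)) ∧
  (∀ t, t + 1 < k → p t ≠ p (t + 2))

/-- if `M*` is the unique minimum weight perfect b-matching and `(y*, λ*)`
is an optimal dual solution (satisfying the modified complementary slackness conditions),
then on every simple alternating cycle of even length `2ℓ` some edge satisfies
`w_{ij} ≠ y*_i + y*_j`. -/
theorem stmt2 [Fintype V] [DecidableEq V] (G : SimpleGraph V) [DecidableRel G.Adj]
    (w : Sym2 V → ℝ) (b : V → ℕ) (M : Finset (Sym2 V)) (y : V → ℝ) (lam : Sym2 V → ℝ)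
    (hM : IsPerfectBMatching G b M)
    (hMopt : ∀ M', IsPerfectBMatching G b M' → matchWeight w M ≤ matchWeight w M')
    (huniq : ∀ M', IsPerfectBMatching G b M' →
      matchWeight w M' = matchWeight w M → M' = M)
    (hlam : ∀ e ∈ G.edgeFinset, 0 ≤ lam e)
    (hin : ∀ i j, G.Adj i j → s(i, j) ∈ M → w s(i, j) + lam s(i, j) = y i + y j)
    (hout : ∀ i j, G.Adj i j → s(i, j) ∉ M →
      lam s(i, j) = 0 ∧ y i + y j ≤ w s(i, j))
    -- a simple alternating cycle of even length `2 * l`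
    (l : ℕ) (hl : 1 ≤ l) (p : ℕ → V)
    (hclose : p (2 * l) = p 0)
    (hinj : ∀ u v, u < v → v < 2 * l → p u ≠ p v)
    (hadj : ∀ k, k < 2 * l → G.Adj (p k) (p (k + 1)))
    (halt : ∀ k, k < 2 * l → (s(p k, p (k + 1)) ∈ M ↔ Even k)) :
    ∃ k, k < 2 * l ∧ w s(p k, p (k + 1)) ≠ y (p k) + y (p (k + 1)) := by
  by_contra hcon
  push_neg at hcon
  -- hcon : ∀ k < 2*l, w s(p k, p (k+1)) = y (p k) + y (p (k+1))
  -- rule out l = 1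
  have hl2 : 2 ≤ l := by
    by_contra hl1
    have : l = 1 := by omega
    subst this
    have h0 := (halt 0 (by norm_num)).2 (by norm_num)
    have h1 := halt 1 (by norm_num)
    have hp2 : p 2 = p 0 := hclose
    rw [hp2, Sym2.eq_swap] at h1
    have := h1.1 h0
    simp at this
  -- injectivity of p on [0, 2l] up to endpoints
  have hp : ∀ u v, u ≤ 2*l → v ≤ 2*l → p u = p v →
      u = v ∨ (u = 0 ∧ v = 2*l) ∨ (u = 2*l ∧ v = 0) := by
    intro u v hu hv h
    rcases eq_or_lt_of_le hu with hu' | hu' <;> rcases eq_or_lt_of_le hv with hv' | hv'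
    · left; omega
    · subst hu'
      rw [hclose] at h
      rcases Nat.eq_zero_or_pos v with h0 | h0
      · right; right; omega
      · exact absurd h (hinj 0 v h0 hv')
    · subst hv'
      rw [hclose] at h
      rcases Nat.eq_zero_or_pos u with h0 | h0
      · right; left; omega
      · exact absurd h.symm (hinj 0 u h0 hu')
    · rcases lt_trichotomy u v with h' | h' | h'
      · exact absurd h (hinj u v h' hv')
      · left; exact h'
      · exact absurd h.symm (hinj v u h' hu')
  -- edge injectivity
  have einj : ∀ j k, j < 2*l → k < 2*l →
      s(p j, p (j+1)) = s(p k, p (k+1)) → j = k := by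
    intro j k hj hk h
    rw [Sym2.eq_iff] at h
    rcases h with ⟨h1, h2⟩ | ⟨h1, h2⟩
    · rcases hp j k (by omega) (by omega) h1 with h | h | h <;> omega
    · have a1 := hp j (k+1) (by omega) (by omega) h1
      have a2 := hp (j+1) k (by omega) (by omega) h2
      rcases a1 with a1 | a1 | a1 <;> rcases a2 with a2 | a2 | a2 <;> omega
  -- vertex membership in cycle edges
  have hmem : ∀ k j, k < 2*l → j < 2*l →
      (p k ∈ s(p j, p (j+1)) ↔ (j = k ∨ j + 1 = k ∨ (k = 0 ∧ j = 2*l - 1))) := by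
    intro k j hk hj
    rw [Sym2.mem_iff]
    constructor
    · rintro (h | h)
      · rcases hp k j (by omega) (by omega) h with h' | h' | h' <;> omega
      · rcases hp k (j+1) (by omega) (by omega) h with h' | h' | h' <;> omega
    · rintro (rfl | hjk | ⟨hk0, hj0⟩)
      · left; rfl
      · right; rw [hjk]
      · right; subst hk0; rw [show j + 1 = 2*l by omega, hclose]
  classical
  set e : ℕ → Sym2 V := fun k => s(p k, p (k+1)) with he
  set Kin : Finset ℕ := (Finset.range (2*l)).filter (fun k => Even k) with hKin
  set Kout : Finset ℕ := (Finset.range (2*l)).filter (fun k => ¬ Even k) with hKout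
  set Cin : Finset (Sym2 V) := Kin.image e with hCin
  set Cout : Finset (Sym2 V) := Kout.image e with hCout
  set M' : Finset (Sym2 V) := (M \ Cin) ∪ Cout with hM'
  have hKinmem : ∀ k, k ∈ Kin ↔ k < 2*l ∧ Even k := by
    intro k; simp [hKin]
  have hKoutmem : ∀ k, k ∈ Kout ↔ k < 2*l ∧ ¬ Even k := by
    intro k; simp [hKout]
  have hCinsub : Cin ⊆ M := by
    intro x hx
    simp only [hCin, Finset.mem_image] at hx
    obtain ⟨k, hk, rfl⟩ := hx
    rw [hKinmem] at hk
    exact (halt k hk.1).2 hk.2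
  have hCoutdisj : ∀ x ∈ Cout, x ∉ M := by
    intro x hx
    simp only [hCout, Finset.mem_image] at hx
    obtain ⟨k, hk, rfl⟩ := hx
    rw [hKoutmem] at hk
    intro hmem'
    exact hk.2 ((halt k hk.1).1 hmem')
  -- counting: for each vertex, cycle edge counts on each side agree
  have hcount : ∀ i : V, (Kin.filter (fun k => i ∈ e k)).card
      = (Kout.filter (fun k => i ∈ e k)).card := by
    intro i
    by_cases hi : ∃ k, k < 2*l ∧ i = p k
    · obtain ⟨k, hk, rfl⟩ := hi
      have hone : ∀ (par : ℕ), par < 2 →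
          ((Finset.range (2*l)).filter
            (fun j => j % 2 = par ∧ p k ∈ e j)).card = 1 := by
        intro par hpar
        have : (Finset.range (2*l)).filter (fun j => j % 2 = par ∧ p k ∈ e j)
            = {if k % 2 = par then k else (if k = 0 then 2*l - 1 else k - 1)} := by
          ext j
          simp only [Finset.mem_filter, Finset.mem_range, Finset.mem_singleton]
          constructor
          · rintro ⟨hj, hjp, hjm⟩
            rw [hmem k j hk hj] at hjm
            rcases hjm with h | h | h <;>
              · split <;> rename_i hsp <;> (try split) <;> omega
          · intro hj
            by_cases hkp : k % 2 = par
            · rw [if_pos hkp] at hj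
              rw [hj]
              exact ⟨hk, hkp, (hmem k k hk hk).2 (Or.inl rfl)⟩
            · rw [if_neg hkp] at hj
              by_cases hk0 : k = 0
              · rw [if_pos hk0] at hj
                rw [hj]
                refine ⟨by omega, by omega, (hmem k (2*l-1) hk (by omega)).2 ?_⟩
                right; right; exact ⟨hk0, rfl⟩
              · rw [if_neg hk0] at hj
                rw [hj]
                refine ⟨by omega, by omega, (hmem k (k-1) hk (by omega)).2 ?_⟩
                right; left; omega
        rw [this, Finset.card_singleton]
      have hA : Kin.filter (fun j => p k ∈ e j)
          = (Finset.range (2*l)).filter (fun j => j % 2 = 0 ∧ p k ∈ e j) := by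
        rw [hKin, Finset.filter_filter]
        apply Finset.filter_congr
        intro j _
        simp [Nat.even_iff]
      have hB : Kout.filter (fun j => p k ∈ e j)
          = (Finset.range (2*l)).filter (fun j => j % 2 = 1 ∧ p k ∈ e j) := by
        rw [hKout, Finset.filter_filter]
        apply Finset.filter_congr
        intro j _
        simp [Nat.even_iff]
        try omega
      rw [hA, hB, hone 0 (by omega), hone 1 (by omega)]
    · have hempty : ∀ j, j < 2*l → i ∉ e j := by
        intro j hj hmem'
        rw [he] at hmem'
        rw [Sym2.mem_iff] at hmem'
        rcases hmem' with h | h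
        · exact hi ⟨j, hj, h⟩
        · rcases Nat.lt_or_ge (j+1) (2*l) with h' | h'
          · exact hi ⟨j+1, h', h⟩
          · rw [show j + 1 = 2*l by omega, hclose] at h
            exact hi ⟨0, by omega, h⟩
      rw [Finset.filter_false_of_mem, Finset.filter_false_of_mem]
      · intro j hj
        exact hempty j ((hKoutmem j).1 hj).1
      · intro j hj
        exact hempty j ((hKinmem j).1 hj).1
  -- M' is a perfect b-matching
  have hM'match : IsPerfectBMatching G b M' := by
    constructor
    · intro x hx
      rw [hM'] at hx
      rcases Finset.mem_union.1 hx with hx | hx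
      · exact hM.1 (Finset.mem_sdiff.1 hx).1
      · simp only [hCout, Finset.mem_image] at hx
        obtain ⟨k, hk, rfl⟩ := hx
        rw [hKoutmem] at hk
        rw [SimpleGraph.mem_edgeFinset]
        exact (hadj k hk.1)
    · intro i
      unfold degIn
      have hsplit : M'.filter (fun x => i ∈ x)
          = ((M.filter (fun x => i ∈ x)) \ (Cin.filter (fun x => i ∈ x)))
            ∪ (Cout.filter (fun x => i ∈ x)) := by
        rw [hM']
        ext x
        simp only [Finset.mem_filter, Finset.mem_union, Finset.mem_sdiff]
        tauto
      rw [hsplit]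
      have hdisj : Disjoint ((M.filter (fun x => i ∈ x)) \ (Cin.filter (fun x => i ∈ x)))
          (Cout.filter (fun x => i ∈ x)) := by
        rw [Finset.disjoint_right]
        intro x hx hx'
        have := hCoutdisj x (Finset.mem_filter.1 hx).1
        exact this (Finset.mem_filter.1 (Finset.mem_sdiff.1 hx').1).1
      rw [Finset.card_union_of_disjoint hdisj]
      have hsub : Cin.filter (fun x => i ∈ x) ⊆ M.filter (fun x => i ∈ x) :=
        Finset.filter_subset_filter _ hCinsub
      rw [Finset.card_sdiff_of_subset hsub]
      have hinjKin : Set.InjOn e ↑Kin := by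
        intro a ha b hb hab
        rw [Finset.mem_coe, hKinmem] at ha hb
        exact einj a b ha.1 hb.1 hab
      have hinjKout : Set.InjOn e ↑Kout := by
        intro a ha b hb hab
        rw [Finset.mem_coe, hKoutmem] at ha hb
        exact einj a b ha.1 hb.1 hab
      have hcin : (Cin.filter (fun x => i ∈ x)).card
          = (Kin.filter (fun k => i ∈ e k)).card := by
        rw [hCin, Finset.filter_image]
        exact Finset.card_image_of_injOn (hinjKin.mono (Finset.coe_subset.2 (Finset.filter_subset _ _)))
      have hcout : (Cout.filter (fun x => i ∈ x)).card
          = (Kout.filter (fun k => i ∈ e k)).card := by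
        rw [hCout, Finset.filter_image]
        exact Finset.card_image_of_injOn (hinjKout.mono (Finset.coe_subset.2 (Finset.filter_subset _ _)))
      rw [hcin, hcout, hcount i]
      have hle : (Kout.filter (fun k => i ∈ e k)).card ≤ (M.filter (fun x => i ∈ x)).card := by
        rw [← hcount i, ← hcin]
        exact Finset.card_le_card hsub
      have := hM.2 i
      unfold degIn at this
      omega
  -- weights agree
  have hinjKin : Set.InjOn e ↑Kin := by
    intro a ha b hb hab
    rw [Finset.mem_coe, hKinmem] at ha hb
    exact einj a b ha.1 hb.1 hab
  have hinjKout : Set.InjOn e ↑Kout := by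
    intro a ha b hb hab
    rw [Finset.mem_coe, hKoutmem] at ha hb
    exact einj a b ha.1 hb.1 hab
  have hKinim : Kin = (Finset.range l).image (fun i => 2*i) := by
    ext k
    simp only [hKinmem k, Finset.mem_image, Finset.mem_range, Nat.even_iff]
    constructor
    · rintro ⟨h1, h2⟩; exact ⟨k/2, by omega, by omega⟩
    · rintro ⟨i, hi, rfl⟩; omega
  have hKoutim : Kout = (Finset.range l).image (fun i => 2*i+1) := by
    ext k
    simp only [hKoutmem k, Finset.mem_image, Finset.mem_range, Nat.even_iff]
    constructor
    · rintro ⟨h1, h2⟩; exact ⟨k/2, by omega, by omega⟩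
    · rintro ⟨i, hi, rfl⟩; omega
  have hsumin : ∑ x ∈ Cin, w x = ∑ i ∈ Finset.range l, w (e (2*i)) := by
    rw [hCin, Finset.sum_image (fun a ha b hb hab => hinjKin ha hb hab), hKinim,
      Finset.sum_image (by intro a _ b _ h; simp only at h; omega)]
  have hsumout : ∑ x ∈ Cout, w x = ∑ i ∈ Finset.range l, w (e (2*i+1)) := by
    rw [hCout, Finset.sum_image (fun a ha b hb hab => hinjKout ha hb hab), hKoutim,
      Finset.sum_image (by intro a _ b _ h; simp only at h; omega)]
  have hweq : ∑ x ∈ Cin, w x = ∑ x ∈ Cout, w x := by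
    rw [hsumin, hsumout]
    have h1 : ∀ i ∈ Finset.range l, w (e (2*i)) = y (p (2*i)) + y (p (2*i+1)) := by
      intro i hi
      rw [Finset.mem_range] at hi
      exact hcon (2*i) (by omega)
    have h2 : ∀ i ∈ Finset.range l, w (e (2*i+1)) = y (p (2*i+1)) + y (p (2*i+2)) := by
      intro i hi
      rw [Finset.mem_range] at hi
      exact hcon (2*i+1) (by omega)
    rw [Finset.sum_congr rfl h1, Finset.sum_congr rfl h2]
    have htel : ∑ i ∈ Finset.range l, (y (p (2*i)) - y (p (2*(i+1)))) = y (p 0) - y (p (2*l)) :=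
      Finset.sum_range_sub' (fun i => y (p (2*i))) l
    rw [hclose, sub_self] at htel
    have : ∑ i ∈ Finset.range l, ((y (p (2*i)) + y (p (2*i+1))) - (y (p (2*i+1)) + y (p (2*i+2))))
        = 0 := by
      calc ∑ i ∈ Finset.range l, ((y (p (2*i)) + y (p (2*i+1))) - (y (p (2*i+1)) + y (p (2*i+2))))
          = ∑ i ∈ Finset.range l, (y (p (2*i)) - y (p (2*(i+1)))) := by
            apply Finset.sum_congr rfl
            intro i _
            have : 2*(i+1) = 2*i+2 := by omega
            rw [this]
            ring
        _ = 0 := htel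
    rw [Finset.sum_sub_distrib] at this
    linarith
  have hw : matchWeight w M' = matchWeight w M := by
    unfold matchWeight
    rw [hM']
    have hdisj : Disjoint (M \ Cin) Cout := by
      rw [Finset.disjoint_right]
      intro x hx
      rw [Finset.mem_sdiff]
      intro h
      exact hCoutdisj x hx h.1
    rw [Finset.sum_union hdisj, Finset.sum_sdiff_eq_sub hCinsub, hweq]
    ring
  have hMM : M' = M := huniq M' hM'match hw
  -- contradiction: e 1 ∈ M' = M but e 1 ∉ M
  have h1in : e 1 ∈ Cout := by
    simp only [hCout, Finset.mem_image]
    exact ⟨1, (hKoutmem 1).2 ⟨by omega, by simp⟩, rfl⟩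
  have h1M' : e 1 ∈ M' := by
    rw [hM']
    exact Finset.mem_union_right _ h1in
  rw [hMM] at h1M'
  have := (halt 1 (by omega)).1 h1M'
  simp at this
end

section
/- Suppose the LP relaxation of minimum weight perfect b-matching on G has no fractional optimal solution, with unique optimal integral solution M* and optimal dual (y*, λ*). Then every alternating walk P (with respect to M*, no immediate edge repetitions) of length at least 2n contains an edge {i,j} with |w_ij − y*_i − y*_j| > 0. -/
set_option autoImplicit false

open Finset

variable {V : Type*}

/-- if the LP relaxation of minimum weight perfect b-matching has no
fractional optimal solution, with unique optimal integral solution given by `M*` and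
optimal dual `(y*, λ*)`, then every alternating walk of length at least `2n` contains an
edge with `|w_{ij} − y*_i − y*_j| > 0`. -/
theorem stmt6 [Fintype V] [DecidableEq V] (G : SimpleGraph V) [DecidableRel G.Adj]
    (w : Sym2 V → ℝ) (b : V → ℕ) (M : Finset (Sym2 V)) (y : V → ℝ) (lam : Sym2 V → ℝ)
    (hM : IsPerfectBMatching G b M)
    (hopt : ∀ x', LPFeasible G b x' → LPCost G w (indic M) ≤ LPCost G w x')
    (hnofrac : ∀ x', LPFeasible G b x' →
      LPCost G w x' = LPCost G w (indic M) → x' = indic M)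
    (hd : DualFeasible G w y lam)
    (hdopt : ∀ y' lam', DualFeasible G w y' lam' → DualObj G b y' lam' ≤ DualObj G b y lam)
    -- an alternating walk of length `k ≥ 2n`
    (k : ℕ) (p : ℕ → V)
    (hwalk : IsAltWalk G M k p)
    (hk : 2 * Fintype.card V ≤ k) :
    ∃ t, t < k ∧ |w s(p t, p (t + 1)) - y (p t) - y (p (t + 1))| > 0 := by
    classical
  by_contra hcon
  push_neg at hcon
  have tight : ∀ r, r < k → w s(p r, p (r + 1)) = y (p r) + y (p (r + 1)) := by
    intro r hr
    have h1 := hcon r hr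
    have h2 : |w s(p r, p (r + 1)) - y (p r) - y (p (r + 1))| = 0 :=
      le_antisymm h1 (abs_nonneg _)
    have := abs_eq_zero.mp h2
    linarith
  -- pigeonhole: find s0 < t0 ≤ k with p s0 = p t0 and equal parity
  obtain ⟨s0, t0, hst, ht0k, hps, hpar⟩ :
      ∃ s0 t0 : ℕ, s0 < t0 ∧ t0 ≤ k ∧ p s0 = p t0 ∧ s0 % 2 = t0 % 2 := by
    have hnoninj : ¬ Function.Injective
        (fun r : Fin (2 * Fintype.card V + 1) => (p r.val, decide (r.val % 2 = 0))) := by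
      intro hinj
      have hcard := Fintype.card_le_of_injective _ hinj
      simp only [Fintype.card_fin, Fintype.card_prod, Fintype.card_bool] at hcard
      omega
    rw [Function.not_injective_iff] at hnoninj
    obtain ⟨a, b', hab, hne⟩ := hnoninj
    have h1 : p a.val = p b'.val := congrArg Prod.fst hab
    have h2 : (a.val % 2 = 0) ↔ (b'.val % 2 = 0) := by
      have := congrArg Prod.snd hab; simpa using this
    have hpar : a.val % 2 = b'.val % 2 := by omega
    have hak : a.val < 2 * Fintype.card V + 1 := a.isLt
    have hbk : b'.val < 2 * Fintype.card V + 1 := b'.isLt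
    rcases Ne.lt_or_gt hne with h | h
    · exact ⟨a.val, b'.val, Fin.lt_def.mp h, by omega, h1, hpar⟩
    · exact ⟨b'.val, a.val, Fin.lt_def.mp h, by omega, h1.symm, hpar.symm⟩
  -- the sign sequence
  set sg : ℕ → ℝ := fun r => if s(p r, p (r + 1)) ∈ M then (-1 : ℝ) else 1 with hsg
  have hsg_abs : ∀ r, |sg r| = 1 := by
    intro r; by_cases h : s(p r, p (r + 1)) ∈ M <;> simp [hsg, h]
  have halt : ∀ r, r + 1 < k → sg (r + 1) = - sg r := by
    intro r hr
    have h := hwalk.2.1 r hr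
    by_cases hm : s(p r, p (r + 1)) ∈ M
    · have h2 : s(p (r + 1), p (r + 1 + 1)) ∉ M := h.mp hm
      simp [hsg, hm, h2]
    · have h2 : s(p (r + 1), p (r + 1 + 1)) ∈ M := by
        by_contra hc; exact hm (h.mpr hc)
      simp [hsg, hm, h2]
  have hsgpow : ∀ r, r < k → sg r = (-1 : ℝ) ^ r * sg 0 := by
    intro r
    induction r with
    | zero => intro _; simp
    | succ m ih =>
      intro hr
      rw [halt m hr, ih (by omega), pow_succ]
      ring
  have hpow : (-1 : ℝ) ^ s0 = (-1 : ℝ) ^ t0 := by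
    rcases Nat.even_or_odd s0 with he | ho
    · have het : Even t0 := by rw [Nat.even_iff] at *; omega
      rw [he.neg_one_pow, het.neg_one_pow]
    · have hot : Odd t0 := by rw [Nat.odd_iff] at *; omega
      rw [ho.neg_one_pow, hot.neg_one_pow]
  -- the telescoping key lemma
  have key : ∀ f : V → ℝ, ∑ r ∈ Finset.Ico s0 t0, sg r * (f (p r) + f (p (r + 1))) = 0 := by
    intro f
    set g : ℕ → ℝ := fun r => sg 0 * ((-1 : ℝ) ^ r * f (p r)) with hg
    have h1 : ∑ r ∈ Finset.Ico s0 t0, sg r * (f (p r) + f (p (r + 1)))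
        = ∑ r ∈ Finset.Ico s0 t0, (g r - g (r + 1)) := by
      apply Finset.sum_congr rfl
      intro r hr
      rw [Finset.mem_Ico] at hr
      rw [hsgpow r (by omega)]
      simp only [hg, pow_succ]
      ring
    rw [h1, Finset.sum_Ico_eq_sum_range]
    have h3 : ∑ i ∈ Finset.range (t0 - s0), (g (s0 + i) - g (s0 + i + 1))
        = g (s0 + 0) - g (s0 + (t0 - s0)) := by
      exact Finset.sum_range_sub' (fun i => g (s0 + i)) (t0 - s0)
    rw [h3]
    have h4 : s0 + (t0 - s0) = t0 := by omega
    rw [Nat.add_zero, h4]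
    simp only [hg, hps, hpow]
    ring
  -- edges of the walk are graph edges
  have hedge : ∀ r, r < k → s(p r, p (r + 1)) ∈ G.edgeFinset := by
    intro r hr
    have := hwalk.1 r hr
    simpa [SimpleGraph.mem_edgeFinset] using this
  -- the circulation
  set c : Sym2 V → ℝ :=
    fun e => ∑ r ∈ Finset.Ico s0 t0, (if s(p r, p (r + 1)) = e then sg r else 0) with hc
  have hc_le : ∀ e ∈ M, c e ≤ 0 := by
    intro e he
    apply Finset.sum_nonpos
    intro r _
    split
    · next h => simp only [hsg]; rw [if_pos (h ▸ he)]; norm_num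
    · exact le_refl 0
  have hc_ge : ∀ e, e ∉ M → 0 ≤ c e := by
    intro e he
    apply Finset.sum_nonneg
    intro r _
    split
    · next h => simp only [hsg]; rw [if_neg (h ▸ he)]; norm_num
    · exact le_refl 0
  have hc_abs : ∀ e, |c e| ≤ (t0 : ℝ) := by
    intro e
    calc |c e| ≤ ∑ r ∈ Finset.Ico s0 t0, |if s(p r, p (r + 1)) = e then sg r else 0| :=
          Finset.abs_sum_le_sum_abs _ _
      _ ≤ ∑ r ∈ Finset.Ico s0 t0, 1 := by
          apply Finset.sum_le_sum
          intro r _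
          split
          · rw [hsg_abs]
          · simp
      _ = ((t0 - s0 : ℕ) : ℝ) := by simp
      _ ≤ (t0 : ℝ) := by
          have : (t0 - s0 : ℕ) ≤ t0 := by omega
          exact_mod_cast this
  set ε : ℝ := 1 / (t0 + 1) with hε
  have hεpos : 0 < ε := by positivity
  have hεt : ε * t0 ≤ 1 := by
    rw [hε, div_mul_eq_mul_div, one_mul, div_le_one (by positivity)]
    linarith
  set x' : Sym2 V → ℝ := fun e => indic M e + ε * c e with hx'
  -- feasibility of x'
  have hx'_feas : LPFeasible G b x' := by
    refine ⟨?_, ?_, ?_⟩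
    · intro e he
      have h1 : indic M e = 0 := by
        rw [indic, if_neg]
        intro hmem; exact he (hM.1 hmem)
      have h2 : c e = 0 := by
        apply Finset.sum_eq_zero
        intro r hr
        rw [Finset.mem_Ico] at hr
        rw [if_neg]
        intro hq; exact he (hq ▸ hedge r (by omega))
      simp [hx', h1, h2]
    · intro e he
      by_cases hm : e ∈ M
      · have h1 := hc_le e hm
        have h2 : -(t0 : ℝ) ≤ c e := (abs_le.mp (hc_abs e)).1
        have h3 : ε * (-(t0 : ℝ)) ≤ ε * c e := mul_le_mul_of_nonneg_left h2 hεpos.le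
        have h4 : ε * c e ≤ 0 := mul_nonpos_of_nonneg_of_nonpos hεpos.le h1
        have h5 : indic M e = 1 := by rw [indic, if_pos hm]
        constructor
        · simp only [hx', h5]; nlinarith
        · simp only [hx', h5]; linarith
      · have h1 := hc_ge e hm
        have h2 : c e ≤ (t0 : ℝ) := (abs_le.mp (hc_abs e)).2
        have h3 : ε * c e ≤ ε * t0 := mul_le_mul_of_nonneg_left h2 hεpos.le
        have h4 : 0 ≤ ε * c e := mul_nonneg hεpos.le h1
        have h5 : indic M e = 0 := by rw [indic, if_neg hm]
        constructor
        · simp only [hx', h5]; linarith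
        · simp only [hx', h5]; linarith
    · intro i
      have hsplit : ∑ e ∈ G.edgeFinset.filter (fun e => i ∈ e), x' e
          = (∑ e ∈ G.edgeFinset.filter (fun e => i ∈ e), indic M e)
            + ε * ∑ e ∈ G.edgeFinset.filter (fun e => i ∈ e), c e := by
        rw [Finset.mul_sum, ← Finset.sum_add_distrib]
      have hind : ∑ e ∈ G.edgeFinset.filter (fun e => i ∈ e), indic M e = (b i : ℝ) := by
        simp only [indic]
        rw [Finset.sum_boole]
        have hfe : (G.edgeFinset.filter (fun e => i ∈ e)).filter (fun e => e ∈ M)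
            = M.filter (fun e => i ∈ e) := by
          ext e
          simp only [Finset.mem_filter]
          constructor
          · rintro ⟨⟨_, h2⟩, h3⟩; exact ⟨h3, h2⟩
          · rintro ⟨h1, h2⟩; exact ⟨⟨hM.1 h1, h2⟩, h1⟩
        rw [hfe]
        have := hM.2 i
        rw [degIn] at this
        rw [this]
      have hcsum : ∑ e ∈ G.edgeFinset.filter (fun e => i ∈ e), c e = 0 := by
        simp only [hc]
        rw [Finset.sum_comm]
        have hre : ∀ r ∈ Finset.Ico s0 t0,
            ∑ e ∈ G.edgeFinset.filter (fun e => i ∈ e),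
              (if s(p r, p (r + 1)) = e then sg r else 0)
            = sg r * ((if i = p r then (1 : ℝ) else 0) + (if i = p (r + 1) then 1 else 0)) := by
          intro r hr
          rw [Finset.mem_Ico] at hr
          have hrk : r < k := by omega
          have hadj := hwalk.1 r hrk
          rw [Finset.sum_ite_eq]
          by_cases h1 : i = p r <;> by_cases h2 : i = p (r + 1)
          · exact absurd (h1.symm.trans h2) hadj.ne
          · simp [Finset.mem_filter, hedge r hrk, Sym2.mem_iff, h1, h2, hadj.ne, hadj.ne']
          · simp [Finset.mem_filter, hedge r hrk, Sym2.mem_iff, h1, h2, hadj.ne, hadj.ne']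
          · simp [Finset.mem_filter, hedge r hrk, Sym2.mem_iff, h1, h2, hadj.ne, hadj.ne']
        rw [Finset.sum_congr rfl hre]
        exact key (fun v => if i = v then 1 else 0)
      rw [hsplit, hind, hcsum]
      ring
  -- equal cost
  have hcost : LPCost G w x' = LPCost G w (indic M) := by
    rw [LPCost, LPCost]
    have hterm : ∀ e ∈ G.edgeFinset, w e * x' e = w e * indic M e + ε * (w e * c e) := by
      intro e _; simp only [hx']; ring
    rw [Finset.sum_congr rfl hterm, Finset.sum_add_distrib, ← Finset.mul_sum]
    have hwc : ∑ e ∈ G.edgeFinset, w e * c e = 0 := by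
      simp only [hc]
      have h1 : ∀ e ∈ G.edgeFinset, w e * ∑ r ∈ Finset.Ico s0 t0,
            (if s(p r, p (r + 1)) = e then sg r else 0)
          = ∑ r ∈ Finset.Ico s0 t0, (if s(p r, p (r + 1)) = e then w e * sg r else 0) := by
        intro e _
        rw [Finset.mul_sum]
        apply Finset.sum_congr rfl
        intro r _
        split <;> ring
      rw [Finset.sum_congr rfl h1, Finset.sum_comm]
      have h2 : ∀ r ∈ Finset.Ico s0 t0,
          ∑ e ∈ G.edgeFinset, (if s(p r, p (r + 1)) = e then w e * sg r else 0)
          = sg r * (y (p r) + y (p (r + 1))) := by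
        intro r hr
        rw [Finset.mem_Ico] at hr
        have hrk : r < k := by omega
        rw [Finset.sum_ite_eq, if_pos (hedge r hrk), tight r hrk]
        ring
      rw [Finset.sum_congr rfl h2]
      exact key y
    rw [hwc]
    ring
  -- x' must equal indic M
  have hx'_eq := hnofrac x' hx'_feas hcost
  -- find a non-matching edge in the cycle
  have hst2 : s0 + 2 ≤ t0 := by omega
  obtain ⟨r0, hr0mem, hr0M⟩ : ∃ r0, r0 ∈ Finset.Ico s0 t0 ∧ s(p r0, p (r0 + 1)) ∉ M := by
    by_cases hm : s(p s0, p (s0 + 1)) ∈ M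
    · have h := (hwalk.2.1 s0 (by omega)).mp hm
      exact ⟨s0 + 1, Finset.mem_Ico.mpr ⟨by omega, by omega⟩, h⟩
    · exact ⟨s0, Finset.mem_Ico.mpr ⟨le_refl _, by omega⟩, hm⟩
  have hr0k : r0 < k := by rw [Finset.mem_Ico] at hr0mem; omega
  have hce0 : 1 ≤ c s(p r0, p (r0 + 1)) := by
    have hnn : ∀ r ∈ Finset.Ico s0 t0,
        0 ≤ (if s(p r, p (r + 1)) = s(p r0, p (r0 + 1)) then sg r else 0) := by
      intro r _
      split
      · next h => simp only [hsg]; rw [if_neg (h ▸ hr0M)]; norm_num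
      · exact le_refl 0
    have hone : (if s(p r0, p (r0 + 1)) = s(p r0, p (r0 + 1)) then sg r0 else 0) = 1 := by
      rw [if_pos rfl]
      simp only [hsg]
      rw [if_neg hr0M]
    calc (1 : ℝ) = _ := hone.symm
      _ ≤ c s(p r0, p (r0 + 1)) := Finset.single_le_sum hnn hr0mem
  have h1 : x' s(p r0, p (r0 + 1)) = indic M s(p r0, p (r0 + 1)) := congrFun hx'_eq _
  have h2 : indic M s(p r0, p (r0 + 1)) = 0 := by rw [indic, if_neg hr0M]
  have h3 : 0 < ε * c s(p r0, p (r0 + 1)) := mul_pos hεpos (by linarith)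
  rw [h2] at h1
  simp only [hx', h2] at h1
  linarith
end

section
/- Let P be an alternating walk consisting of an odd simple cycle C_1, a simple connecting path P_2, and another odd simple cycle C_2 (vertex-disjoint except along P), all with respect to the unique optimal b-matching M*, and suppose w_ij = y*_i + y*_j for all edges of C_1 ∪ P_2 ∪ C_2. Then the vector x' defined by x'_ij = x*_ij off C_1∪P_2∪C_2, x'_ij = 1 − x*_ij on P_2, and x'_ij = 1/2 on C_1 ∪ C_2, is a feasible solution of the LP relaxation with the same objective value as x*; hence the LP has a fractional optimal solution. -/
set_option autoImplicit false

open Finset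

variable {V : Type*}

/-- let `P` be an alternating walk consisting of an odd simple cycle
`C₁ = p[0..a]`, a simple connecting path `P₂ = p[a..c]` and another odd simple cycle
`C₂ = p[c..d]`, vertex-disjoint except along the walk, with respect to the unique optimal
perfect b-matching `M*`, and suppose `w_{ij} = y*_i + y*_j` on all its edges.  Then the
vector `x'` (equal to `x*` off `C₁ ∪ P₂ ∪ C₂`, to `1 − x*` on `P₂`, and to `1/2` on
`C₁ ∪ C₂`) is LP feasible with the same objective value as `x*`; hence the LP has a
fractional optimal solution. -/
theorem stmt7 [Fintype V] [DecidableEq V] (G : SimpleGraph V) [DecidableRel G.Adj]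
    (w : Sym2 V → ℝ) (b : V → ℕ) (M : Finset (Sym2 V)) (y : V → ℝ)
    (hM : IsPerfectBMatching G b M)
    (hopt : ∀ x', LPFeasible G b x' → LPCost G w (indic M) ≤ LPCost G w x')
    (huniq : ∀ M', IsPerfectBMatching G b M' →
      matchWeight w M' = matchWeight w M → M' = M)
    -- the walk `P = C₁ ∪ P₂ ∪ C₂`
    (p : ℕ → V) (d a c : ℕ) (ha : 0 < a) (hac : a ≤ c) (hcd : c < d)
    (hodd1 : Odd a) (hodd2 : Odd (d - c))
    (hC1 : p 0 = p a) (hC2 : p c = p d)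
    (hwalk : IsAltWalk G M d p)
    (hinj : ∀ u v, u < v → v ≤ d → p u = p v →
      (u = 0 ∧ v = a) ∨ (u = c ∧ v = d) ∨ (a = c ∧ u = 0 ∧ v = d))
    -- all edges of the walk satisfy the dual equality
    (heq : ∀ k, k < d → w s(p k, p (k + 1)) = y (p k) + y (p (k + 1))) :
    LPFeasible G b (fun e =>
      if e ∈ ((Finset.range a).image (fun k => s(p k, p (k + 1)))) ∪
             ((Finset.Ico c d).image (fun k => s(p k, p (k + 1)))) then 1 / 2
      else if e ∈ (Finset.Ico a c).image (fun k => s(p k, p (k + 1))) then 1 - indic M e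
      else indic M e) ∧
    LPCost G w (fun e =>
      if e ∈ ((Finset.range a).image (fun k => s(p k, p (k + 1)))) ∪
             ((Finset.Ico c d).image (fun k => s(p k, p (k + 1)))) then 1 / 2
      else if e ∈ (Finset.Ico a c).image (fun k => s(p k, p (k + 1))) then 1 - indic M e
      else indic M e) = LPCost G w (indic M) ∧
    ∃ e ∈ G.edgeFinset,
      (if e ∈ ((Finset.range a).image (fun k => s(p k, p (k + 1)))) ∪
             ((Finset.Ico c d).image (fun k => s(p k, p (k + 1)))) then (1 : ℝ) / 2
      else if e ∈ (Finset.Ico a c).image (fun k => s(p k, p (k + 1))) then 1 - indic M e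
      else indic M e) = 1 / 2 := by
  classical
  obtain ⟨hMsub, hMdeg⟩ := hM
  obtain ⟨hadj, halt, hne2⟩ := hwalk
  have hpne : ∀ t, t < d → p t ≠ p (t + 1) := fun t ht => (hadj t ht).ne
  have had : a < d := lt_of_le_of_lt hac hcd
  have ha2 : 2 ≤ a := by
    by_contra h
    have h1 : a = 1 := by omega
    exact hpne 0 (by omega) (by rw [h1] at hC1; exact hC1)
  have hdc2 : c + 2 ≤ d := by
    by_contra h
    have h1 : d = c + 1 := by omega
    exact hpne c hcd (by rw [h1] at hC2; exact hC2)
  have hedmem : ∀ k, k < d → s(p k, p (k + 1)) ∈ G.edgeFinset := by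
    intro k hk
    simpa [SimpleGraph.mem_edgeFinset] using hadj k hk
  -- distinctness of the walk edges
  have hinj' : ∀ u v, u < v → v < d → s(p u, p (u + 1)) ≠ s(p v, p (v + 1)) := by
    intro u v huv hv heq'
    rw [Sym2.eq_iff] at heq'
    rcases heq' with ⟨h1, h2⟩ | ⟨h1, h2⟩
    · rcases hinj u v huv (le_of_lt hv) h1 with ⟨hu0, hva⟩ | ⟨huc, hvd⟩ | ⟨hacq, hu0, hvd⟩
      · rw [hu0, hva] at h2
        norm_num at h2
        rcases hinj 1 (a + 1) (by omega) (by omega) h2 with ⟨h, _⟩ | ⟨h, h'⟩ | ⟨_, h, _⟩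
        · omega
        · omega
        · omega
      · omega
      · omega
    · rcases Nat.lt_or_ge (u + 1) v with h | h
      · rcases hinj (u + 1) v h (le_of_lt hv) h2 with ⟨h', _⟩ | ⟨h', h''⟩ | ⟨_, h', _⟩ <;> omega
      · have huv1 : u + 1 = v := by omega
        apply hne2 u (by omega)
        rw [h1, show v + 1 = u + 2 by omega]
  -- vertex-identification helpers
  have heqv0 : ∀ k, k ≤ d → p k = p 0 → k = 0 ∨ k = a ∨ (a = c ∧ k = d) := by
    intro k hk hpk
    rcases Nat.eq_zero_or_pos k with h | h
    · left; exact h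
    · rcases hinj 0 k h hk hpk.symm with ⟨_, h2⟩ | ⟨h1, h2⟩ | ⟨h1, _, h3⟩
      · omega
      · omega
      · right; right; exact ⟨h1, h3⟩
  have heqvc : ∀ k, k ≤ d → p k = p c → k = c ∨ k = d ∨ (a = c ∧ k = 0) := by
    intro k hk hpk
    rcases lt_trichotomy k c with h | h | h
    · rcases hinj k c h (by omega) hpk with ⟨h1, h2⟩ | ⟨h1, h2⟩ | ⟨h1, h2, h3⟩ <;> omega
    · omega
    · rcases hinj c k h hk hpk.symm with ⟨h1, h2⟩ | ⟨h1, h2⟩ | ⟨h1, h2, h3⟩ <;> omega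
  have heqvt : ∀ t, 0 < t → t < d → t ≠ a → t ≠ c → ∀ k, k ≤ d → p k = p t → k = t := by
    intro t ht0 htd hta htc k hk hpk
    rcases lt_trichotomy k t with h | h | h
    · rcases hinj k t h (by omega) hpk with ⟨h1, h2⟩ | ⟨h1, h2⟩ | ⟨h1, h2, h3⟩ <;> omega
    · exact h
    · rcases hinj t k h hk hpk.symm with ⟨h1, h2⟩ | ⟨h1, h2⟩ | ⟨h1, h2, h3⟩ <;> omega
  -- the mu function and alternation
  set μ : ℕ → ℝ := fun k => if s(p k, p (k + 1)) ∈ M then 1 else 0 with hμdef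
  have hμ01 : ∀ k, μ k = 0 ∨ μ k = 1 := by
    intro k; by_cases h : s(p k, p (k + 1)) ∈ M <;> simp [hμdef, h]
  have halt1 : ∀ k, k + 1 < d → μ (k + 1) = 1 - μ k := by
    intro k hk
    by_cases h : s(p k, p (k + 1)) ∈ M
    · have h2 : s(p (k + 1), p (k + 2)) ∉ M := (halt k hk).mp h
      simp [hμdef, h, h2]
    · have h2 : s(p (k + 1), p (k + 2)) ∈ M := by
        by_contra h2; exact h ((halt k hk).mpr h2)
      simp [hμdef, h, h2]
  have hpar : ∀ n j, j + n < d → μ (j + n) = if Even n then μ j else 1 - μ j := by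
    intro n
    induction n with
    | zero => intro j _; simp
    | succ n ih =>
      intro j hj
      have h1 : j + n + 1 < d := by omega
      have h2 := halt1 (j + n) (by omega)
      have h3 : j + (n + 1) = (j + n) + 1 := by ring
      rw [h3, h2, ih j (by omega)]
      by_cases he : Even n <;> simp [Nat.even_add_one, he] <;> ring
  -- the correction function on indices
  set g : ℕ → ℝ := fun k => if k < a ∨ c ≤ k then 1 / 2 - μ k else 1 - 2 * μ k with hgdef
  -- the main combinatorial lemma: corrections around each vertex sum to zero
  have hsum0 : ∀ i : V, ∑ k ∈ (Finset.range d).filter (fun k => i ∈ s(p k, p (k + 1))), g k = 0 := by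
    intro i
    have hmemiff : ∀ k, (k ∈ (Finset.range d).filter (fun k => i ∈ s(p k, p (k + 1)))) ↔
        (k < d ∧ (p k = i ∨ p (k + 1) = i)) := by
      intro k
      simp [Finset.mem_filter, Sym2.mem_iff, eq_comm]
    by_cases h0 : p 0 = i
    · by_cases haceq : a = c
      · -- one big vertex: S = {0, a-1, a, d-1}
        have hfilt : (Finset.range d).filter (fun k => i ∈ s(p k, p (k + 1))) = {0, a - 1, a, d - 1} := by
          ext k
          rw [hmemiff]
          simp only [Finset.mem_insert, Finset.mem_singleton]
          constructor
          · rintro ⟨hk, h | h⟩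
            · rcases heqv0 k (by omega) (h.trans h0.symm) with h' | h' | ⟨_, h'⟩ <;> omega
            · rcases heqv0 (k + 1) (by omega) (h.trans h0.symm) with h' | h' | ⟨_, h'⟩ <;> omega
          · rintro (rfl | rfl | rfl | rfl)
            · exact ⟨by omega, Or.inl h0⟩
            · refine ⟨by omega, Or.inr ?_⟩
              rw [show a - 1 + 1 = a by omega, ← hC1]; exact h0
            · exact ⟨by omega, Or.inl (hC1 ▸ h0)⟩
            · refine ⟨by omega, Or.inr ?_⟩
              rw [show d - 1 + 1 = d by omega, ← hC2, ← haceq, ← hC1]; exact h0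
        rw [hfilt]
        have hev1 : Even (a - 1) := Nat.Odd.sub_odd hodd1 odd_one
        have e1 : μ (a - 1) = μ 0 := by
          have := hpar (a - 1) 0 (by omega)
          rw [Nat.zero_add] at this
          rw [this, if_pos hev1]
        have e2 : μ a = 1 - μ (a - 1) := by
          have := halt1 (a - 1) (by omega)
          rwa [show a - 1 + 1 = a by omega] at this
        have e3 : μ (d - 1) = μ c := by
          have := hpar (d - 1 - c) c (by omega)
          rw [show c + (d - 1 - c) = d - 1 by omega] at this
          rw [this, if_pos (by have := Nat.Odd.sub_odd hodd2 odd_one; simpa [show d - c - 1 = d - 1 - c by omega] using this)]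
        have e4 : μ c = 1 - μ (a - 1) := by rw [← haceq, ← e2]
        rw [Finset.sum_insert (by simp; omega), Finset.sum_insert (by simp; omega),
            Finset.sum_insert (by simp; omega), Finset.sum_singleton]
        have g0 : g 0 = 1 / 2 - μ 0 := by rw [hgdef]; exact if_pos (by omega)
        have g1 : g (a - 1) = 1 / 2 - μ (a - 1) := by rw [hgdef]; exact if_pos (by omega)
        have g2 : g a = 1 / 2 - μ a := by rw [hgdef]; exact if_pos (by omega)
        have g3 : g (d - 1) = 1 / 2 - μ (d - 1) := by rw [hgdef]; exact if_pos (by omega)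
        rw [g0, g1, g2, g3]; linarith [e1, e2, e3, e4]
      · -- S = {0, a-1, a}
        have hfilt : (Finset.range d).filter (fun k => i ∈ s(p k, p (k + 1))) = {0, a - 1, a} := by
          ext k
          rw [hmemiff]
          simp only [Finset.mem_insert, Finset.mem_singleton]
          constructor
          · rintro ⟨hk, h | h⟩
            · rcases heqv0 k (by omega) (h.trans h0.symm) with h' | h' | ⟨h', _⟩ <;> omega
            · rcases heqv0 (k + 1) (by omega) (h.trans h0.symm) with h' | h' | ⟨h', _⟩ <;> omega
          · rintro (rfl | rfl | rfl)
            · exact ⟨by omega, Or.inl h0⟩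
            · refine ⟨by omega, Or.inr ?_⟩
              rw [show a - 1 + 1 = a by omega, ← hC1]; exact h0
            · exact ⟨by omega, Or.inl (hC1 ▸ h0)⟩
        rw [hfilt]
        have hev1 : Even (a - 1) := Nat.Odd.sub_odd hodd1 odd_one
        have e1 : μ (a - 1) = μ 0 := by
          have := hpar (a - 1) 0 (by omega)
          rw [Nat.zero_add] at this
          rw [this, if_pos hev1]
        have e2 : μ a = 1 - μ (a - 1) := by
          have := halt1 (a - 1) (by omega)
          rwa [show a - 1 + 1 = a by omega] at this
        rw [Finset.sum_insert (by simp; omega), Finset.sum_insert (by simp; omega),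
            Finset.sum_singleton]
        have g0 : g 0 = 1 / 2 - μ 0 := by rw [hgdef]; exact if_pos (by omega)
        have g1 : g (a - 1) = 1 / 2 - μ (a - 1) := by rw [hgdef]; exact if_pos (by omega)
        have g2 : g a = 1 - 2 * μ a := by rw [hgdef]; exact if_neg (by omega)
        rw [g0, g1, g2]; linarith [e1, e2]
    · by_cases hc0 : p c = i
      · have haceq : a ≠ c := by
          intro h; apply h0
          rw [hC1, h]; exact hc0
        have hfilt : (Finset.range d).filter (fun k => i ∈ s(p k, p (k + 1))) = {c - 1, c, d - 1} := by
          ext k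
          rw [hmemiff]
          simp only [Finset.mem_insert, Finset.mem_singleton]
          constructor
          · rintro ⟨hk, h | h⟩
            · rcases heqvc k (by omega) (h.trans hc0.symm) with h' | h' | ⟨h', _⟩ <;> omega
            · rcases heqvc (k + 1) (by omega) (h.trans hc0.symm) with h' | h' | ⟨h', _⟩ <;> omega
          · rintro (rfl | rfl | rfl)
            · refine ⟨by omega, Or.inr ?_⟩
              rw [show c - 1 + 1 = c by omega]; exact hc0
            · exact ⟨by omega, Or.inl hc0⟩
            · refine ⟨by omega, Or.inr ?_⟩
              rw [show d - 1 + 1 = d by omega, ← hC2]; exact hc0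
        rw [hfilt]
        have hlt : 0 < c := by omega
        have e2 : μ c = 1 - μ (c - 1) := by
          have := halt1 (c - 1) (by omega)
          rwa [show c - 1 + 1 = c by omega] at this
        have e3 : μ (d - 1) = μ c := by
          have := hpar (d - 1 - c) c (by omega)
          rw [show c + (d - 1 - c) = d - 1 by omega] at this
          rw [this, if_pos (by have := Nat.Odd.sub_odd hodd2 odd_one; simpa [show d - c - 1 = d - 1 - c by omega] using this)]
        rw [Finset.sum_insert (by simp; omega), Finset.sum_insert (by simp; omega),
            Finset.sum_singleton]
        have g1 : g (c - 1) = 1 - 2 * μ (c - 1) := by rw [hgdef]; exact if_neg (by omega)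
        have g2 : g c = 1 / 2 - μ c := by rw [hgdef]; exact if_pos (by omega)
        have g3 : g (d - 1) = 1 / 2 - μ (d - 1) := by rw [hgdef]; exact if_pos (by omega)
        rw [g1, g2, g3]; linarith [e2, e3]
      · by_cases hex : ∃ t, t ≤ d ∧ p t = i
        · obtain ⟨t, htd, hpt⟩ := hex
          have ht0 : t ≠ 0 := fun h => h0 (h ▸ hpt)
          have htc : t ≠ c := fun h => hc0 (h ▸ hpt)
          have hta : t ≠ a := fun h => h0 (by rw [hC1, ← h]; exact hpt)
          have htd' : t ≠ d := fun h => hc0 (by rw [hC2, ← h]; exact hpt)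
          have ht1 : 0 < t := by omega
          have ht2 : t < d := by omega
          have hfilt : (Finset.range d).filter (fun k => i ∈ s(p k, p (k + 1))) = {t - 1, t} := by
            ext k
            rw [hmemiff]
            simp only [Finset.mem_insert, Finset.mem_singleton]
            constructor
            · rintro ⟨hk, h | h⟩
              · have := heqvt t ht1 ht2 hta htc k (by omega) (h.trans hpt.symm)
                omega
              · have := heqvt t ht1 ht2 hta htc (k + 1) (by omega) (h.trans hpt.symm)
                omega
            · rintro (rfl | rfl)
              · refine ⟨by omega, Or.inr ?_⟩
                rw [show t - 1 + 1 = t by omega]; exact hpt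
              · exact ⟨by omega, Or.inl hpt⟩
          rw [hfilt]
          rw [Finset.sum_insert (by simp; omega), Finset.sum_singleton]
          have e2 : μ t = 1 - μ (t - 1) := by
            have := halt1 (t - 1) (by omega)
            rwa [show t - 1 + 1 = t by omega] at this
          have htri : t < a ∨ (a < t ∧ t < c) ∨ c < t := by omega
          rcases htri with h | ⟨h1, h2⟩ | h
          · have g1 : g (t - 1) = 1 / 2 - μ (t - 1) := by rw [hgdef]; exact if_pos (by omega)
            have g2 : g t = 1 / 2 - μ t := by rw [hgdef]; exact if_pos (by omega)
            rw [g1, g2]; linarith [e2]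
          · have g1 : g (t - 1) = 1 - 2 * μ (t - 1) := by rw [hgdef]; exact if_neg (by omega)
            have g2 : g t = 1 - 2 * μ t := by rw [hgdef]; exact if_neg (by omega)
            rw [g1, g2]; linarith [e2]
          · have g1 : g (t - 1) = 1 / 2 - μ (t - 1) := by rw [hgdef]; exact if_pos (by omega)
            have g2 : g t = 1 / 2 - μ t := by rw [hgdef]; exact if_pos (by omega)
            rw [g1, g2]; linarith [e2]
        · have hfilt : (Finset.range d).filter (fun k => i ∈ s(p k, p (k + 1))) = ∅ := by
            ext k
            rw [hmemiff]
            simp only [Finset.notMem_empty, iff_false]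
            rintro ⟨hk, h | h⟩
            · exact hex ⟨k, by omega, h⟩
            · exact hex ⟨k + 1, by omega, h⟩
          rw [hfilt, Finset.sum_empty]
  -- name the edge sets and the candidate solution
  set W13 : Finset (Sym2 V) := ((Finset.range a).image (fun k => s(p k, p (k + 1)))) ∪
      ((Finset.Ico c d).image (fun k => s(p k, p (k + 1)))) with hW13
  set W2 : Finset (Sym2 V) := (Finset.Ico a c).image (fun k => s(p k, p (k + 1))) with hW2
  set x' : Sym2 V → ℝ := fun e =>
      if e ∈ W13 then 1 / 2 else if e ∈ W2 then 1 - indic M e else indic M e with hx'def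
  set WD : Finset (Sym2 V) := (Finset.range d).image (fun k => s(p k, p (k + 1))) with hWD
  -- membership characterizations
  have hmemW : ∀ (s : Finset ℕ), (∀ j ∈ s, j < d) → ∀ k, k < d →
      (s(p k, p (k + 1)) ∈ s.image (fun k => s(p k, p (k + 1))) ↔ k ∈ s) := by
    intro s hs k hk
    constructor
    · intro h
      obtain ⟨j, hj, hje⟩ := Finset.mem_image.mp h
      rcases lt_trichotomy j k with h' | h' | h'
      · exact absurd hje (hinj' j k h' hk)
      · rwa [h'] at hj
      · exact absurd hje.symm (hinj' k j h' (hs j hj))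
    · intro h; exact Finset.mem_image_of_mem _ h
  have hW13iff : ∀ k, k < d → (s(p k, p (k + 1)) ∈ W13 ↔ (k < a ∨ c ≤ k)) := by
    intro k hk
    rw [hW13, Finset.mem_union,
        hmemW (Finset.range a) (by intro j hj; simp at hj; omega) k hk,
        hmemW (Finset.Ico c d) (by intro j hj; simp at hj; omega) k hk,
        Finset.mem_range, Finset.mem_Ico]
    omega
  have hW2iff : ∀ k, k < d → (s(p k, p (k + 1)) ∈ W2 ↔ (a ≤ k ∧ k < c)) := by
    intro k hk
    rw [hW2, hmemW (Finset.Ico a c) (by intro j hj; simp at hj; omega) k hk, Finset.mem_Ico]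
  have hWDsub13 : W13 ⊆ WD := by
    rw [hW13, hWD]
    apply Finset.union_subset
    · exact Finset.image_subset_image (by intro j hj; simp at hj ⊢; omega)
    · exact Finset.image_subset_image (by intro j hj; simp at hj ⊢; omega)
  have hWDsub2 : W2 ⊆ WD := by
    rw [hW2, hWD]
    exact Finset.image_subset_image (by intro j hj; simp at hj ⊢; omega)
  have hWDedge : WD ⊆ G.edgeFinset := by
    rw [hWD]
    intro e he
    obtain ⟨j, hj, rfl⟩ := Finset.mem_image.mp he
    exact hedmem j (by simpa using hj)
  -- the correction function on edges
  set hcor : Sym2 V → ℝ := fun e =>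
      if e ∈ W13 then 1 / 2 - indic M e else if e ∈ W2 then 1 - 2 * indic M e else 0 with hcordef
  have hcor0 : ∀ e, e ∉ WD → hcor e = 0 := by
    intro e he
    have h13 : e ∉ W13 := fun h => he (hWDsub13 h)
    have h2 : e ∉ W2 := fun h => he (hWDsub2 h)
    simp only [hcordef]
    rw [if_neg h13, if_neg h2]
  have hsplit : ∀ e, x' e = indic M e + hcor e := by
    intro e
    simp only [hx'def, hcordef]
    split_ifs <;> ring
  have hindμ : ∀ k, indic M (s(p k, p (k + 1))) = μ k := fun k => rfl
  have hcor_g : ∀ k, k < d → hcor (s(p k, p (k + 1))) = g k := by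
    intro k hk
    by_cases h1 : k < a ∨ c ≤ k
    · have l : hcor (s(p k, p (k + 1))) = 1 / 2 - indic M (s(p k, p (k + 1))) := by
        simp only [hcordef]; rw [if_pos ((hW13iff k hk).mpr h1)]
      have r : g k = 1 / 2 - μ k := by rw [hgdef]; exact if_pos h1
      rw [l, r, hindμ]
    · have l : hcor (s(p k, p (k + 1))) = 1 - 2 * indic M (s(p k, p (k + 1))) := by
        simp only [hcordef]
        rw [if_neg (fun hm => h1 ((hW13iff k hk).mp hm)), if_pos ((hW2iff k hk).mpr (by omega))]
      have r : g k = 1 - 2 * μ k := by rw [hgdef]; exact if_neg h1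
      rw [l, r, hindμ]
  -- vertex sums of the correction vanish
  have hdegcor : ∀ i, ∑ e ∈ G.edgeFinset.filter (fun e => i ∈ e), hcor e = 0 := by
    intro i
    have hsub : WD.filter (fun e => i ∈ e) ⊆ G.edgeFinset.filter (fun e => i ∈ e) := by
      intro e he
      rw [Finset.mem_filter] at he ⊢
      exact ⟨hWDedge he.1, he.2⟩
    rw [← Finset.sum_subset hsub (by
      intro e he hne
      rw [Finset.mem_filter] at he hne
      exact hcor0 e (fun h => hne ⟨h, he.2⟩))]
    rw [hWD, Finset.filter_image,
        Finset.sum_image (by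
          intro u hu v hv huv
          simp only [Finset.mem_coe, Finset.mem_filter, Finset.mem_range] at hu hv
          rcases lt_trichotomy u v with h' | h' | h'
          · exact absurd huv (hinj' u v h' hv.1)
          · exact h'
          · exact absurd huv.symm (hinj' v u h' hu.1))]
    rw [← hsum0 i]
    apply Finset.sum_congr rfl
    intro k hk
    simp only [Finset.mem_filter, Finset.mem_range] at hk
    exact hcor_g k hk.1
  -- vertex sums of indic M give b
  have hdegM : ∀ i, ∑ e ∈ G.edgeFinset.filter (fun e => i ∈ e), indic M e = (b i : ℝ) := by
    intro i
    have h1 : (G.edgeFinset.filter (fun e => i ∈ e)).filter (fun e => e ∈ M)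
        = M.filter (fun e => i ∈ e) := by
      ext e
      simp only [Finset.mem_filter]
      constructor
      · rintro ⟨⟨_, h2⟩, h3⟩; exact ⟨h3, h2⟩
      · rintro ⟨h2, h3⟩; exact ⟨⟨hMsub h2, h3⟩, h2⟩
    calc ∑ e ∈ G.edgeFinset.filter (fun e => i ∈ e), indic M e
        = ∑ e ∈ G.edgeFinset.filter (fun e => i ∈ e), if e ∈ M then (1 : ℝ) else 0 := rfl
      _ = ((G.edgeFinset.filter (fun e => i ∈ e)).filter (fun e => e ∈ M)).card :=
          Finset.sum_boole _ _
      _ = (M.filter (fun e => i ∈ e)).card := by rw [h1]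
      _ = (degIn M i : ℝ) := rfl
      _ = (b i : ℝ) := by rw [hMdeg i]
  -- feasibility
  have hfeas : LPFeasible G b x' := by
    refine ⟨?_, ?_, ?_⟩
    · intro e he
      have hWDe : e ∉ WD := fun h => he (hWDedge h)
      have h13 : e ∉ W13 := fun h => hWDe (hWDsub13 h)
      have h2 : e ∉ W2 := fun h => hWDe (hWDsub2 h)
      simp only [hx'def]
      rw [if_neg h13, if_neg h2]
      simp only [indic]
      rw [if_neg (fun hm => he (hMsub hm))]
    · intro e _
      simp only [hx'def, indic]
      split_ifs <;> norm_num
    · intro i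
      calc ∑ e ∈ G.edgeFinset.filter (fun e => i ∈ e), x' e
          = ∑ e ∈ G.edgeFinset.filter (fun e => i ∈ e), (indic M e + hcor e) :=
            Finset.sum_congr rfl (fun e _ => hsplit e)
        _ = (∑ e ∈ G.edgeFinset.filter (fun e => i ∈ e), indic M e)
            + ∑ e ∈ G.edgeFinset.filter (fun e => i ∈ e), hcor e := Finset.sum_add_distrib
        _ = (b i : ℝ) := by rw [hdegM i, hdegcor i, add_zero]
  -- cost equality
  have hcost : LPCost G w x' = LPCost G w (indic M) := by
    have hz : ∑ e ∈ G.edgeFinset, w e * hcor e = 0 := by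
      have hsub : WD ⊆ G.edgeFinset := hWDedge
      rw [← Finset.sum_subset hsub (by intro e _ hne; rw [hcor0 e hne, mul_zero])]
      rw [hWD, Finset.sum_image (by
        intro u hu v hv huv
        simp only [Finset.mem_coe, Finset.mem_range] at hu hv
        rcases lt_trichotomy u v with h' | h' | h'
        · exact absurd huv (hinj' u v h' hv)
        · exact h'
        · exact absurd huv.symm (hinj' v u h' hu))]
      have h2 : ∀ k ∈ Finset.range d,
          w s(p k, p (k + 1)) * hcor s(p k, p (k + 1))
            = ∑ i : V, (if i ∈ s(p k, p (k + 1)) then y i * g k else 0) := by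
        intro k hk
        rw [Finset.mem_range] at hk
        have hfl : (Finset.univ.filter (fun i : V => i ∈ s(p k, p (k + 1))))
            = {p k, p (k + 1)} := by
          ext v
          simp [Sym2.mem_iff]
        rw [← Finset.sum_filter, hfl, Finset.sum_pair (hpne k hk), hcor_g k hk, heq k hk]
        ring
      rw [Finset.sum_congr rfl h2, Finset.sum_comm]
      apply Finset.sum_eq_zero
      intro i _
      rw [← Finset.sum_filter, ← Finset.mul_sum, hsum0 i, mul_zero]
    unfold LPCost
    calc ∑ e ∈ G.edgeFinset, w e * x' e
        = ∑ e ∈ G.edgeFinset, (w e * indic M e + w e * hcor e) :=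
          Finset.sum_congr rfl (fun e _ => by rw [hsplit e]; ring)
      _ = (∑ e ∈ G.edgeFinset, w e * indic M e) + ∑ e ∈ G.edgeFinset, w e * hcor e :=
          Finset.sum_add_distrib
      _ = ∑ e ∈ G.edgeFinset, w e * indic M e := by rw [hz, add_zero]
  refine ⟨hfeas, hcost, s(p 0, p 1), hedmem 0 (by omega), ?_⟩
  have hm : s(p 0, p 1) ∈ W13 := by
    rw [hW13]
    apply Finset.mem_union_left
    exact Finset.mem_image_of_mem _ (Finset.mem_range.mpr ha)
  rw [if_pos hm]
end

section
/- Let T be the t-level computation tree of G rooted at vertex i, built by replicating the local neighborhood structure of G (the root i has children labeled by N(i); every non-leaf node s with parent labeled r has children labeled by N(s)\{r}). Then the messages m_{j→i}(t) of the synchronous min-sum BP recursion m_{i→j}(t) = w_ij − (b_i-th minimum over ℓ∈N(i)\{j} of m_{ℓ→i}(t−1)), initialized by m_{i→j}(0) = w_ij, satisfy m_{j→i}(t) = W⁺_{j→i}(t) − W⁻_{j→i}(t), where W⁺ (resp. W⁻) is the minimum weight of a perfect tree-b-matching of the branch T_{j→i}^t that contains (resp. does not contain) the root edge {i,j}. 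-/
set_option autoImplicit false

open Finset

variable {V : Type*}

/-- The `k`-th smallest element of a finite multiset of reals (1-indexed). -/
noncomputable def kthMin (s : Multiset ℝ) (k : ℕ) : ℝ :=
  (s.sort (· ≤ ·)).getD (k - 1) 0


open List in
lemma sublist_getElem_le : ∀ {l₁ l₂ : List ℝ}, l₁ <+ l₂ → l₁.Pairwise (· ≤ ·) →
    l₂.Pairwise (· ≤ ·) → ∀ k (hk : k < l₁.length) (hk2 : k < l₂.length), l₂[k] ≤ l₁[k] := by
  intro l₁ l₂ h
  induction h with
  | slnil => intro _ _ k hk _; simp at hk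
  | @cons l₁ l₂ a h ih =>
    intro h₁ h₂ k hk hk2
    have hs2 : l₂.Pairwise (· ≤ ·) := h₂.of_cons
    have ha : ∀ b ∈ l₂, a ≤ b := (List.pairwise_cons.mp h₂).1
    have hlen := h.length_le
    match k with
    | 0 =>
      simpa using ha _ (h.subset (l₁.getElem_mem hk))
    | (j+1) =>
      have hj1 : j + 1 < l₂.length := lt_of_lt_of_le hk hlen
      have h1 : l₂[j] ≤ l₂[j+1] :=
        hs2.rel_get_of_lt (a := ⟨j, Nat.lt_of_succ_lt hj1⟩) (b := ⟨j+1, hj1⟩) (by simp)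
      simpa using h1.trans (ih h₁ hs2 (j+1) hk hj1)
  | @cons_cons l₁ l₂ a h ih =>
    intro h₁ h₂ k hk hk2
    match k with
    | 0 => simp
    | (j+1) =>
      have := ih h₁.of_cons h₂.of_cons j (by simpa using hk) (by simpa using hk2)
      simpa using this


lemma kthMin_le_kthMin {u m : Multiset ℝ} (h : u ≤ m) {k : ℕ} (hk : k < Multiset.card u) :
    kthMin m (k + 1) ≤ kthMin u (k + 1) := by
  set lu := u.sort (· ≤ ·) with hlu
  set lm := m.sort (· ≤ ·) with hlm
  have hcu : lu.length = Multiset.card u := Multiset.length_sort _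
  have hcm : lm.length = Multiset.card m := Multiset.length_sort _
  have hkm : k < lm.length := by
    rw [hcm]; exact lt_of_lt_of_le (hcu ▸ hk) (Multiset.card_le_card h)
  have hku : k < lu.length := hcu ▸ hk
  have hsub : List.Sublist lu lm := by
    have h' : (↑lu : Multiset ℝ) ≤ ↑lm := by
      rw [Multiset.sort_eq, Multiset.sort_eq]; exact h
    obtain ⟨l', hperm, hsl⟩ := Multiset.coe_le.mp h'
    have hsort' : l'.Pairwise (· ≤ ·) := (Multiset.pairwise_sort _ _).sublist hsl
    rwa [List.Perm.eq_of_pairwise' hsort' (Multiset.pairwise_sort _ _) hperm] at hsl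
  have := sublist_getElem_le hsub (Multiset.pairwise_sort _ _) (Multiset.pairwise_sort _ _) k hku hkm
  rw [kthMin, kthMin]
  simp only [Nat.add_sub_cancel]
  rw [List.getD_eq_getElem _ _ hku, List.getD_eq_getElem _ _ hkm]
  exact this

lemma take_sort_sum_eq (m : Multiset ℝ) {k : ℕ} (hk : k ≤ Multiset.card m) :
    ((m.sort (· ≤ ·)).take k).sum = ∑ i ∈ Finset.range k, kthMin m (i + 1) := by
  induction k with
  | zero => simp
  | succ k ih =>
    have hk' : k < (m.sort (· ≤ ·)).length := by rw [Multiset.length_sort]; omega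
    rw [List.sum_take_succ _ _ hk', Finset.sum_range_succ, ih (by omega)]
    rw [kthMin]
    simp only [Nat.add_sub_cancel]
    rw [List.getD_eq_getElem _ _ hk']

lemma take_sum_le_sum {u m : Multiset ℝ} (h : u ≤ m) :
    ((m.sort (· ≤ ·)).take (Multiset.card u)).sum ≤ u.sum := by
  have h1 : u.sum = ((u.sort (· ≤ ·)).take (Multiset.card u)).sum := by
    rw [← Multiset.length_sort (· ≤ ·) (s := u), List.take_length,
      ← Multiset.sum_coe, Multiset.sort_eq]
  rw [h1, take_sort_sum_eq m (Multiset.card_le_card h), take_sort_sum_eq u le_rfl]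
  exact Finset.sum_le_sum fun i hi =>
    kthMin_le_kthMin h (Finset.mem_range.mp hi)

lemma exists_subset_sum_eq' {V : Type*} [DecidableEq V] (s : Finset V) (d : V → ℝ) (k : ℕ)
    (hk : k ≤ s.card) :
    ∃ A : Finset V, A ⊆ s ∧ A.card = k ∧
      ∑ r ∈ A, d r = (((s.val.map d).sort (· ≤ ·)).take k).sum := by
  classical
  set le : V → V → Bool := fun a b => decide (d a ≤ d b) with hle
  set ls : List V := s.toList.mergeSort le with hls
  have hperm : List.Perm ls s.toList := List.mergeSort_perm _ _
  have hnd : ls.Nodup := hperm.nodup_iff.mpr s.nodup_toList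
  have hsorted : ls.Pairwise (fun a b => d a ≤ d b) := by
    have := List.pairwise_mergeSort (le := le)
      (fun a b c h1 h2 => by simp only [hle, decide_eq_true_eq] at *; exact h1.trans h2)
      (fun a b => by simp only [hle, Bool.or_eq_true, decide_eq_true_eq]; exact le_total _ _)
      s.toList
    exact this.imp fun h => by simpa [hle] using h
  have hmap_sorted : (ls.map d).Pairwise (· ≤ ·) := List.Pairwise.map d (fun _ _ h => h) hsorted
  have hcoe : ((ls.map d : List ℝ) : Multiset ℝ) = s.val.map d := by
    rw [← Multiset.map_coe, Multiset.coe_eq_coe.mpr hperm, Finset.coe_toList]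
  have heq : ls.map d = (s.val.map d).sort (· ≤ ·) := by
    refine List.Perm.eq_of_pairwise' hmap_sorted (Multiset.pairwise_sort _ _) ?_
    rw [← Multiset.coe_eq_coe, hcoe, Multiset.sort_eq]
  have hlen : ls.length = s.card := by rw [hperm.length_eq, Finset.length_toList]
  have hknd : (ls.take k).Nodup := hnd.sublist (List.take_sublist _ _)
  refine ⟨⟨(ls.take k : List V), Multiset.coe_nodup.mpr hknd⟩, ?_, ?_, ?_⟩
  · intro a ha
    have : a ∈ ls := List.mem_of_mem_take (by simpa using ha)
    rw [← Finset.mem_toList]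
    exact hperm.mem_iff.mp this
  · simp only [Finset.card_mk, Multiset.coe_card, List.length_take]
    omega
  · rw [Finset.sum_eq_multiset_sum]
    simp only [Multiset.map_coe, Multiset.sum_coe]
    rw [← heq, List.map_take]

lemma csInf_branch' {V : Type*} [DecidableEq V] (s : Finset V) (F G : V → ℝ) (k : ℕ)
    (hk : k ≤ s.card) :
    sInf {x : ℝ | ∃ A : Finset V, A ⊆ s ∧ A.card = k ∧
        x = (∑ r ∈ A, F r) + ∑ r ∈ s \ A, G r} =
      (∑ r ∈ s, G r) + (((s.val.map (fun r => F r - G r)).sort (· ≤ ·)).take k).sum := by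
  have key : ∀ A : Finset V, A ⊆ s →
      (∑ r ∈ A, F r) + ∑ r ∈ s \ A, G r = (∑ r ∈ s, G r) + ∑ r ∈ A, (F r - G r) := by
    intro A hA
    have h1 := Finset.sum_sdiff (f := G) hA
    rw [Finset.sum_sub_distrib]
    linarith
  apply IsLeast.csInf_eq
  constructor
  · obtain ⟨A, hA, hcard, hsum⟩ := exists_subset_sum_eq' s (fun r => F r - G r) k hk
    exact ⟨A, hA, hcard, by rw [key A hA, hsum]⟩
  · rintro x ⟨A, hA, hcard, rfl⟩
    rw [key A hA]
    have hle : (A.val.map fun r => F r - G r) ≤ (s.val.map fun r => F r - G r) :=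
      Multiset.map_le_map (Finset.val_le_iff.mpr hA)
    have h2 := take_sum_le_sum hle
    rw [Multiset.card_map] at h2
    have h3 : Multiset.card A.val = k := by rw [← Finset.card_def, hcard]
    rw [h3] at h2
    simp only [Finset.sum_eq_multiset_sum]
    linarith

lemma take_succ_kth' (m : Multiset ℝ) {k : ℕ} (hk : k < Multiset.card m) :
    ((m.sort (· ≤ ·)).take (k + 1)).sum = ((m.sort (· ≤ ·)).take k).sum + kthMin m (k + 1) := by
  have hk' : k < (m.sort (· ≤ ·)).length := by rw [Multiset.length_sort]; omega
  rw [List.sum_take_succ _ _ hk', kthMin]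
  simp only [Nat.add_sub_cancel]
  rw [List.getD_eq_getElem _ _ hk']


/-- The synchronous min-sum BP messages for minimum weight perfect b-matching:
`bpMsg t i j` is the message `m_{i→j}(t)`, with `m_{i→j}(0) = w_{ij}` and
`m_{i→j}(t) = w_{ij} − (b_i)-th min over ℓ ∈ N(i)\{j} of m_{ℓ→i}(t−1)`. -/
noncomputable def bpMsg [Fintype V] [DecidableEq V] (G : SimpleGraph V) [DecidableRel G.Adj]
    (w : Sym2 V → ℝ) (b : V → ℕ) : ℕ → V → V → ℝ
  | 0, i, j => w s(i, j)
  | t + 1, i, j => w s(i, j) -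
      kthMin (((G.neighborFinset i).erase j).val.map (fun l => bpMsg G w b t l i)) (b i)

/-- `(Wbranch G w b t j i).1` (resp. `.2`) is the minimum weight `W⁺_{j→i}(t)`
(resp. `W⁻_{j→i}(t)`) of a perfect tree-b-matching of the branch `T_{j→i}^t` of the
computation tree that contains (resp. does not contain) the root edge `{i,j}`:
a matching of the branch is determined by the set `A ⊆ N(j)\{i}` of children edges used at
`j` (which must make the degree of `j` equal to `b j`), together with optimal extensions
`W⁺`/`W⁻` on the sub-branches. -/
noncomputable def Wbranch [Fintype V] [DecidableEq V] (G : SimpleGraph V) [DecidableRel G.Adj]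
    (w : Sym2 V → ℝ) (b : V → ℕ) : ℕ → V → V → ℝ × ℝ
  | 0, j, i => (w s(i, j), 0)
  | t + 1, j, i =>
      (w s(i, j) + sInf {x : ℝ | ∃ A : Finset V, A ⊆ (G.neighborFinset j).erase i ∧
          A.card = b j - 1 ∧
          x = (∑ r ∈ A, (Wbranch G w b t r j).1) +
              ∑ r ∈ ((G.neighborFinset j).erase i) \ A, (Wbranch G w b t r j).2},
       sInf {x : ℝ | ∃ A : Finset V, A ⊆ (G.neighborFinset j).erase i ∧
          A.card = b j ∧
          x = (∑ r ∈ A, (Wbranch G w b t r j).1) +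
              ∑ r ∈ ((G.neighborFinset j).erase i) \ A, (Wbranch G w b t r j).2})

/-- on a graph with no trivial vertices (`1 ≤ b i < deg i`), the synchronous
min-sum BP messages compute the differences of branch weights of the computation tree:
`m_{j→i}(t) = W⁺_{j→i}(t) − W⁻_{j→i}(t)`. -/
theorem stmt8 [Fintype V] [DecidableEq V] (G : SimpleGraph V) [DecidableRel G.Adj]
    (w : Sym2 V → ℝ) (b : V → ℕ)
    (hb : ∀ i, 1 ≤ b i ∧ b i < G.degree i) :
    ∀ (t : ℕ) (i j : V), G.Adj i j →
      bpMsg G w b t j i = (Wbranch G w b t j i).1 - (Wbranch G w b t j i).2 := by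
  intro t
  induction t with
  | zero =>
    intro i j _
    show w s(j, i) = w s(i, j) - 0
    rw [Sym2.eq_swap, sub_zero]
  | succ t ih =>
    intro i j hij
    have hadj : ∀ l ∈ (G.neighborFinset j).erase i, G.Adj j l := fun l hl =>
      (G.mem_neighborFinset j l).mp (Finset.mem_of_mem_erase hl)
    set s : Finset V := (G.neighborFinset j).erase i with hs
    set F : V → ℝ := fun l => (Wbranch G w b t l j).1 with hF
    set Gm : V → ℝ := fun l => (Wbranch G w b t l j).2 with hGm
    have hms : s.val.map (fun l => bpMsg G w b t l j) = s.val.map (fun l => F l - Gm l) :=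
      Multiset.map_congr rfl fun l hl => ih j l (hadj l hl)
    have hmem : i ∈ G.neighborFinset j := (G.mem_neighborFinset j i).mpr hij.symm
    have hcard : s.card = G.degree j - 1 := by
      rw [hs, Finset.card_erase_of_mem hmem]; rfl
    obtain ⟨hb1, hdeg⟩ := hb j
    have hks : b j ≤ s.card := by omega
    have hks1 : b j - 1 ≤ s.card := by omega
    have e1 : bpMsg G w b (t + 1) j i =
        w s(j, i) - kthMin (s.val.map (fun l => bpMsg G w b t l j)) (b j) := rfl
    have e2 : Wbranch G w b (t + 1) j i =
      (w s(i, j) + sInf {x : ℝ | ∃ A : Finset V, A ⊆ s ∧ A.card = b j - 1 ∧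
          x = (∑ r ∈ A, F r) + ∑ r ∈ s \ A, Gm r},
       sInf {x : ℝ | ∃ A : Finset V, A ⊆ s ∧ A.card = b j ∧
          x = (∑ r ∈ A, F r) + ∑ r ∈ s \ A, Gm r}) := rfl
    rw [e1, e2, hms]
    have hkth : kthMin (s.val.map fun l => F l - Gm l) (b j)
        = kthMin (s.val.map fun l => F l - Gm l) (b j) := rfl
    rw [hkth]
    simp only [csInf_branch' s F Gm _ hks1, csInf_branch' s F Gm _ hks]
    have hcm : b j - 1 < Multiset.card (s.val.map fun r => F r - Gm r) := by
      rw [Multiset.card_map, ← Finset.card_def]; omega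
    have htk := take_succ_kth' (s.val.map fun r => F r - Gm r) hcm
    rw [show b j - 1 + 1 = b j by omega] at htk
    rw [Sym2.eq_swap (a := i) (b := j)]
    rw [htk]
    ring
end

section
/- In the setting of the min-sum BP recursion on the computation tree, for a non-leaf node i_j with parent i and children j_1, …, j_ℓ ordered so that W⁺_{j_1→i_j}(t−1) ≤ … ≤ W⁺_{j_ℓ→i_j}(t−1), and writing a = b_{i_j}, the branch weights satisfy W⁺_{i_j→i}(t) = w_{i i_j} + Σ_{r=1}^{a−1} W⁺_{j_r→i_j}(t−1) + Σ_{r=a}^{ℓ} W⁻_{j_r→i_j}(t−1) and W⁻_{i_j→i}(t) = Σ_{r=1}^{a} W⁺_{j_r→i_j}(t−1) + Σ_{r=a+1}^{ℓ} W⁻_{j_r→i_j}(t−1); consequently n_{i_j→i}(t) := W⁺ − W⁻ = w_{i i_j} − a-th-min over children of n_{j_r→i_j}(t−1). -/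
set_option autoImplicit false

open Finset
open Finset

lemma filter_lt_eq_image {l k : ℕ} (hk : k ≤ l) :
    (univ.filter (fun r : Fin l => (r : ℕ) < k)) = Finset.image (Fin.castLE hk) univ := by
  ext r
  rw [Finset.mem_filter, Finset.mem_image]
  constructor
  · rintro ⟨-, hr⟩; exact ⟨⟨r, hr⟩, Finset.mem_univ _, rfl⟩
  · rintro ⟨m, -, rfl⟩; exact ⟨Finset.mem_univ _, m.isLt⟩

lemma card_filter_lt {l k : ℕ} (hk : k ≤ l) :
    (univ.filter (fun r : Fin l => (r : ℕ) < k)).card = k := by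
  rw [filter_lt_eq_image hk, Finset.card_image_of_injective _ (Fin.castLE_injective hk)]
  simp

lemma sum_initial_le {l k : ℕ} (hk : k ≤ l) (n : Fin l → ℝ) (hn : Monotone n)
    (B : Finset (Fin l)) (hB : B.card = k) :
    ∑ r ∈ univ.filter (fun r : Fin l => (r : ℕ) < k), n r ≤ ∑ r ∈ B, n r := by
  classical
  set e := B.orderEmbOfFin hB with he
  have hle : ∀ m (h : m < k), m ≤ (e ⟨m, h⟩ : ℕ) := by
    intro m
    induction m with
    | zero => intro h; exact Nat.zero_le _
    | succ p ih =>
      intro h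
      have hp : p < k := by omega
      have h1 := ih hp
      have h2 : e ⟨p, hp⟩ < e ⟨p+1, h⟩ := e.strictMono (by simp [Fin.lt_def])
      have h3 := Fin.lt_def.mp h2
      omega
  have hBimg : Finset.image e univ = B := by
    apply Finset.coe_injective
    simp only [Finset.coe_image, Finset.coe_univ, Set.image_univ]
    exact Finset.range_orderEmbOfFin B hB
  rw [filter_lt_eq_image hk, ← hBimg,
      Finset.sum_image (fun a _ b _ h => Fin.castLE_injective hk h),
      Finset.sum_image (fun a _ b _ h => e.injective h)]
  apply Finset.sum_le_sum
  intro m _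
  exact hn (by rw [Fin.le_def]; simpa using hle m m.isLt)

lemma sInf_branch {V : Type*} [Fintype V] [DecidableEq V] (S : Finset V) (f g : V → ℝ)
    {l k : ℕ} (c : Fin l → V) (hcinj : Function.Injective c)
    (hcimg : univ.image c = S) (hk : k ≤ l)
    (hmono : Monotone fun r => f (c r) - g (c r)) :
    sInf {x : ℝ | ∃ A : Finset V, A ⊆ S ∧ A.card = k ∧
        x = (∑ r ∈ A, f r) + ∑ r ∈ S \ A, g r} =
      (∑ r ∈ univ.filter (fun r : Fin l => (r : ℕ) < k), f (c r)) +
      ∑ r ∈ univ.filter (fun r : Fin l => ¬ (r : ℕ) < k), g (c r) := by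
  classical
  set φ : Finset V → ℝ := fun A => (∑ r ∈ A, f r) + ∑ r ∈ S \ A, g r with hφdef
  have hScard : S.card = l := by
    rw [← hcimg, Finset.card_image_of_injective _ hcinj]; simp
  have hne : ((S.powersetCard k).image φ).Nonempty :=
    Finset.Nonempty.image (Finset.powersetCard_nonempty.mpr (hScard ▸ hk)) _
  have hset : {x : ℝ | ∃ A : Finset V, A ⊆ S ∧ A.card = k ∧
      x = (∑ r ∈ A, f r) + ∑ r ∈ S \ A, g r} = ↑((S.powersetCard k).image φ) := by
    ext x
    simp only [Set.mem_setOf_eq, Finset.coe_image, Set.mem_image, Finset.mem_coe,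
      Finset.mem_powersetCard]
    constructor
    · rintro ⟨A, h1, h2, rfl⟩; exact ⟨A, ⟨h1, h2⟩, rfl⟩
    · rintro ⟨A, ⟨h1, h2⟩, rfl⟩; exact ⟨A, h1, h2, rfl⟩
  -- value of φ on images of subsets of Fin l
  have hφ : ∀ B : Finset (Fin l), φ (Finset.image c B) =
      (∑ r, g (c r)) + ∑ r ∈ B, (f (c r) - g (c r)) := by
    intro B
    have h1 : ∑ r ∈ Finset.image c B, f r = ∑ r ∈ B, f (c r) :=
      Finset.sum_image (fun a _ b _ h => hcinj h)
    have h2 : S \ Finset.image c B = Finset.image c (univ \ B) := by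
      rw [← hcimg, Finset.image_sdiff _ _ hcinj]
    have h3 : ∑ r ∈ S \ Finset.image c B, g r = ∑ r ∈ univ \ B, g (c r) := by
      rw [h2]; exact Finset.sum_image (fun a _ b _ h => hcinj h)
    have h4 : ∑ r ∈ B, (f (c r) - g (c r)) = ∑ r ∈ B, f (c r) - ∑ r ∈ B, g (c r) :=
      Finset.sum_sub_distrib _ _
    have h5 : (∑ r ∈ univ \ B, g (c r)) + ∑ r ∈ B, g (c r) = ∑ r, g (c r) :=
      Finset.sum_sdiff (Finset.subset_univ B)
    rw [hφdef]; simp only []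
    rw [h1, h3]; linarith
  set Bk : Finset (Fin l) := univ.filter (fun r : Fin l => (r : ℕ) < k) with hBk
  have hBkmem : Finset.image c Bk ∈ S.powersetCard k := by
    rw [Finset.mem_powersetCard]
    constructor
    · rw [← hcimg]; exact Finset.image_subset_image (Finset.subset_univ _)
    · rw [Finset.card_image_of_injective _ hcinj]; exact card_filter_lt hk
  have htarget : φ (Finset.image c Bk) =
      (∑ r ∈ univ.filter (fun r : Fin l => (r : ℕ) < k), f (c r)) +
      ∑ r ∈ univ.filter (fun r : Fin l => ¬ (r : ℕ) < k), g (c r) := by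
    have h1 : ∑ r ∈ Finset.image c Bk, f r = ∑ r ∈ Bk, f (c r) :=
      Finset.sum_image (fun a _ b _ h => hcinj h)
    have h2 : S \ Finset.image c Bk = Finset.image c (univ \ Bk) := by
      rw [← hcimg, Finset.image_sdiff _ _ hcinj]
    have h3 : ∑ r ∈ S \ Finset.image c Bk, g r = ∑ r ∈ univ \ Bk, g (c r) := by
      rw [h2]; exact Finset.sum_image (fun a _ b _ h => hcinj h)
    have h6 : univ \ Bk = univ.filter (fun r : Fin l => ¬ (r : ℕ) < k) := by
      rw [hBk, ← Finset.filter_not]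
    rw [hφdef]; simp only []
    rw [h1, h3, h6]
  rw [hset, Finset.Nonempty.csInf_eq_min' hne]
  apply le_antisymm
  · exact Finset.min'_le _ _ (Finset.mem_image.mpr ⟨_, hBkmem, htarget⟩)
  · apply Finset.le_min'
    intro y hy
    obtain ⟨A, hA, rfl⟩ := Finset.mem_image.mp hy
    obtain ⟨hAS, hAc⟩ := Finset.mem_powersetCard.mp hA
    set B : Finset (Fin l) := univ.filter (fun r => c r ∈ A) with hB
    have hAB : Finset.image c B = A := by
      apply Finset.Subset.antisymm
      · intro x hx
        obtain ⟨r, hr, rfl⟩ := Finset.mem_image.mp hx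
        exact (Finset.mem_filter.mp hr).2
      · intro x hx
        have hxS : x ∈ S := hAS hx
        rw [← hcimg] at hxS
        obtain ⟨r, -, rfl⟩ := Finset.mem_image.mp hxS
        exact Finset.mem_image.mpr ⟨r, Finset.mem_filter.mpr ⟨mem_univ _, hx⟩, rfl⟩
    have hBc : B.card = k := by
      rw [← hAc, ← hAB, Finset.card_image_of_injective _ hcinj]
    calc (∑ r ∈ univ.filter (fun r : Fin l => (r : ℕ) < k), f (c r)) +
          ∑ r ∈ univ.filter (fun r : Fin l => ¬ (r : ℕ) < k), g (c r)
        = φ (Finset.image c Bk) := htarget.symm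
      _ = (∑ r, g (c r)) + ∑ r ∈ Bk, (f (c r) - g (c r)) := hφ Bk
      _ ≤ (∑ r, g (c r)) + ∑ r ∈ B, (f (c r) - g (c r)) := by
            exact add_le_add (le_refl _) (sum_initial_le hk _ hmono B hBc)
      _ = φ (Finset.image c B) := (hφ B).symm
      _ = φ A := by rw [hAB]

variable {V : Type*}

/-- the BP recursion on the computation tree.  Let `i_j` be a child of `i`
with `a = b_{i_j}` and children `c 0, …, c (l-1)` (an enumeration of `N(i_j)\{i}`) ordered
so that the `W⁺` values — and the differences `n = W⁺ − W⁻` — are monotone.  Then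
`W⁺_{i_j→i}(t) = w_{i i_j} + Σ_{r<a-1} W⁺_{c r→i_j}(t−1) + Σ_{r≥a-1} W⁻_{c r→i_j}(t−1)`,
`W⁻_{i_j→i}(t) = Σ_{r<a} W⁺_{c r→i_j}(t−1) + Σ_{r≥a} W⁻_{c r→i_j}(t−1)`, and consequently
`n_{i_j→i}(t) = w_{i i_j} − (a-th minimum of the n_{c r→i_j}(t−1))`. -/
theorem stmt9 [Fintype V] [DecidableEq V] (G : SimpleGraph V) [DecidableRel G.Adj]
    (w : Sym2 V → ℝ) (b : V → ℕ) (t : ℕ) (i j : V) (hij : G.Adj i j)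
    (l : ℕ) (c : Fin l → V)
    (hcinj : Function.Injective c)
    (hcimg : Finset.univ.image c = (G.neighborFinset j).erase i)
    (ha1 : 1 ≤ b j) (hal : b j ≤ l)
    (hmono : Monotone (fun r : Fin l => (Wbranch G w b t (c r) j).1))
    (hmono' : Monotone (fun r : Fin l =>
      (Wbranch G w b t (c r) j).1 - (Wbranch G w b t (c r) j).2)) :
    (Wbranch G w b (t + 1) j i).1 = w s(i, j) +
      (∑ r ∈ Finset.univ.filter (fun r : Fin l => (r : ℕ) < b j - 1),
        (Wbranch G w b t (c r) j).1) +
      (∑ r ∈ Finset.univ.filter (fun r : Fin l => ¬ (r : ℕ) < b j - 1),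
        (Wbranch G w b t (c r) j).2) ∧
    (Wbranch G w b (t + 1) j i).2 =
      (∑ r ∈ Finset.univ.filter (fun r : Fin l => (r : ℕ) < b j),
        (Wbranch G w b t (c r) j).1) +
      (∑ r ∈ Finset.univ.filter (fun r : Fin l => ¬ (r : ℕ) < b j),
        (Wbranch G w b t (c r) j).2) ∧
    (Wbranch G w b (t + 1) j i).1 - (Wbranch G w b (t + 1) j i).2 =
      w s(i, j) - ((Wbranch G w b t (c ⟨b j - 1, by omega⟩) j).1 -
                   (Wbranch G w b t (c ⟨b j - 1, by omega⟩) j).2) := by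
  classical
  have hp1 : (Wbranch G w b (t + 1) j i).1 = w s(i, j) +
      (∑ r ∈ Finset.univ.filter (fun r : Fin l => (r : ℕ) < b j - 1),
        (Wbranch G w b t (c r) j).1) +
      (∑ r ∈ Finset.univ.filter (fun r : Fin l => ¬ (r : ℕ) < b j - 1),
        (Wbranch G w b t (c r) j).2) := by
    show w s(i, j) + _ = _
    rw [sInf_branch ((G.neighborFinset j).erase i)
      (fun r => (Wbranch G w b t r j).1) (fun r => (Wbranch G w b t r j).2)
      c hcinj hcimg (by omega : b j - 1 ≤ l) hmono', add_assoc]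
  have hp2 : (Wbranch G w b (t + 1) j i).2 =
      (∑ r ∈ Finset.univ.filter (fun r : Fin l => (r : ℕ) < b j),
        (Wbranch G w b t (c r) j).1) +
      (∑ r ∈ Finset.univ.filter (fun r : Fin l => ¬ (r : ℕ) < b j),
        (Wbranch G w b t (c r) j).2) := by
    show sInf _ = _
    exact sInf_branch ((G.neighborFinset j).erase i)
      (fun r => (Wbranch G w b t r j).1) (fun r => (Wbranch G w b t r j).2)
      c hcinj hcimg hal hmono'
  refine ⟨hp1, hp2, ?_⟩
  have e1 : Finset.univ.filter (fun r : Fin l => (r : ℕ) < b j)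
      = insert (⟨b j - 1, by omega⟩ : Fin l)
          (Finset.univ.filter (fun r : Fin l => (r : ℕ) < b j - 1)) := by
    ext r; simp [Fin.ext_iff]; omega
  have e2 : Finset.univ.filter (fun r : Fin l => ¬ (r : ℕ) < b j - 1)
      = insert (⟨b j - 1, by omega⟩ : Fin l)
          (Finset.univ.filter (fun r : Fin l => ¬ (r : ℕ) < b j)) := by
    ext r; simp [Fin.ext_iff]; omega
  have hm1 : (⟨b j - 1, by omega⟩ : Fin l) ∉
      Finset.univ.filter (fun r : Fin l => (r : ℕ) < b j - 1) := by simp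
  have hm2 : (⟨b j - 1, by omega⟩ : Fin l) ∉
      Finset.univ.filter (fun r : Fin l => ¬ (r : ℕ) < b j) := by
    simp; omega
  rw [hp1, hp2, e1, e2, Finset.sum_insert hm1, Finset.sum_insert hm2]
  ring
end

section
/- Let M* be the lift of the unique optimal perfect b-matching M* of G to the computation tree T_i^t, and let N* be a minimum weight perfect tree-b-matching of T_i^t. If N* and M* select different edges at the root, then there exists a path P_t of length 2t through the root of the computation tree whose edges alternately belong to N*\M* and M*\N*. -/
set_option autoImplicit false

open Finset

variable {V : Type*}

/-- A node of the `t`-level computation tree `T_i^t` of `G` rooted at `i`, encoded as the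
list of labels on the path from the root to the node: it starts at `i`, consecutive labels
are adjacent in `G`, it never backtracks (rule (c): children of a node exclude the parent
label), and it has at most `t+1` entries (the tree has `t+1` levels). -/
def IsCTNode (G : SimpleGraph V) (i : V) (t : ℕ) (l : List V) : Prop :=
  l.Chain' G.Adj ∧ l.head? = some i ∧ 1 ≤ l.length ∧ l.length ≤ t + 1 ∧
  ∀ n (a c : V), l[n]? = some a → l[n + 2]? = some c → a ≠ c

/-- The edge of the computation tree joining a (non-root) node to its parent, described by
the last two labels of the node. -/
def lastEdge? : List V → Option (Sym2 V) := fun l =>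
  match l.reverse with
  | a :: b :: _ => some s(b, a)
  | _ => none

/-- The weight of the parent edge of a tree node. -/
noncomputable def nodeWeight (w : Sym2 V → ℝ) (l : List V) : ℝ :=
  ((lastEdge? l).map w).getD 0

/-- A perfect tree-b-matching of the computation tree `T_i^t`: a set `N` of tree edges
(each recorded as the lower node of the edge) such that every non-leaf node labelled `v'`
has exactly `b v'` incident selected edges (the parent edge plus the selected children
edges). -/
def IsTreeBMatching [Fintype V] [DecidableEq V] (G : SimpleGraph V) (b : V → ℕ)
    (i : V) (t : ℕ) (N : Finset (List V)) : Prop :=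
  (∀ l ∈ N, IsCTNode G i t l ∧ 2 ≤ l.length) ∧
  (∀ (l : List V) (v' : V), IsCTNode G i t l → l.length ≤ t → l.getLast? = some v' →
    ((if l ∈ N then 1 else 0) +
      (Finset.univ.filter (fun v : V => l ++ [v] ∈ N)).card) = b v')

/-- The total weight of a set of computation-tree edges. -/
noncomputable def treeWeight (w : Sym2 V → ℝ) (N : Finset (List V)) : ℝ :=
  ∑ l ∈ N, nodeWeight w l

/-- The tree edge recorded by the node `l` belongs to the lift of the edge set `M` of `G`
to the computation tree `T_i^t` (i.e. the labels of its endpoints form an edge of `M`). -/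
def InLift (G : SimpleGraph V) (i : V) (t : ℕ) (M : Finset (Sym2 V)) (l : List V) : Prop :=
  IsCTNode G i t l ∧ ∃ e ∈ M, lastEdge? l = some e

/-- The node of the computation tree at depth `k` along the downward path
`i, f 1, f 2, …`. -/
def Fpath (i : V) (f : ℕ → V) (k : ℕ) : List V :=
  i :: (List.range k).map (fun j => f (j + 1))

section AuxStmt10

variable {V : Type*}

private lemma card_nbrs [Fintype V] [DecidableEq V] (M : Finset (Sym2 V)) (v' : V) :
    (Finset.univ.filter (fun v => s(v', v) ∈ M)).card = degIn M v' := by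
  unfold degIn
  apply Finset.card_bij (fun v _ => s(v', v))
  · intro v hv
    simp only [Finset.mem_filter, Finset.mem_univ, true_and] at hv ⊢
    exact ⟨hv, Sym2.mem_mk_left v' v⟩
  · intro v1 _ v2 _ h
    exact Sym2.congr_right.mp h
  · intro e he
    simp only [Finset.mem_filter] at he
    obtain ⟨y, hy⟩ := Sym2.mem_iff_exists.mp he.2
    exact ⟨y, by simp only [Finset.mem_filter, Finset.mem_univ, true_and, ← hy]; exact he.1,
      hy.symm⟩

private lemma lastEdge?_concat2 (l' : List V) (u v' : V) :
    lastEdge? (l' ++ [u, v']) = some s(u, v') := by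
  unfold lastEdge?
  rw [List.reverse_append]
  rfl

private lemma getLast?_concat2 (l' : List V) (u v' : V) :
    (l' ++ [u, v']).getLast? = some v' := by
  simp

private lemma getElem?_pair (l' : List V) (u v' : V) :
    (l' ++ [u, v'])[l'.length]? = some u := by
  rw [List.getElem?_append_right (le_refl _)]
  simp

private lemma concat3_eq (l' : List V) (u v' v : V) :
    l' ++ [u, v'] ++ [v] = (l' ++ [u]) ++ [v', v] := by
  simp

private lemma getElem?_triple_mid (l' : List V) (u v' v : V) :
    (l' ++ [u, v'] ++ [v])[l'.length]? = some u := by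
  rw [List.getElem?_append_left (by simp)]
  exact getElem?_pair l' u v'

private lemma getElem?_triple_last (l' : List V) (u v' v : V) :
    (l' ++ [u, v'] ++ [v])[l'.length + 2]? = some v := by
  rw [concat3_eq, List.getElem?_append_right (by simp)]
  simp

private lemma two_le_decomp (l : List V) (h : 2 ≤ l.length) :
    ∃ l' u v', l = l' ++ [u, v'] := by
  rcases hr : l.reverse with _ | ⟨a, rest⟩
  · exfalso; rw [← List.length_reverse (as := l), hr] at h; simp at h
  rcases rest with _ | ⟨bb, r⟩
  · exfalso; rw [← List.length_reverse (as := l), hr] at h; simp at h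
  · exact ⟨r.reverse, bb, a, by rw [← List.reverse_reverse l, hr]; simp⟩

private lemma isCTNode_pair {G : SimpleGraph V} {i v : V} {t : ℕ}
    (hadj : G.Adj i v) (ht : 1 ≤ t) : IsCTNode G i t [i, v] := by
  refine ⟨?_, rfl, by simp, by simp; omega, ?_⟩
  · exact List.isChain_pair.mpr hadj
  · intro n a c _ hc
    rw [List.getElem?_eq_none (by simp)] at hc
    cases hc

private lemma isCTNode_root {G : SimpleGraph V} (i : V) (t : ℕ) : IsCTNode G i t [i] := by
  refine ⟨List.isChain_singleton i, rfl, by simp, by simp, ?_⟩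
  intro n a c _ hc
  rw [List.getElem?_eq_none (by simp)] at hc
  cases hc

private lemma isCTNode_append {G : SimpleGraph V} {i : V} {t : ℕ} {l' : List V} {u v' v : V}
    (hl : IsCTNode G i t (l' ++ [u, v'])) (hlen : (l' ++ [u, v']).length ≤ t)
    (hadj : G.Adj v' v) (hne : u ≠ v) :
    IsCTNode G i t (l' ++ [u, v'] ++ [v]) := by
  obtain ⟨hchain, hhead, -, -, hnb⟩ := hl
  have hlen2 : (l' ++ [u, v']).length = l'.length + 2 := by simp
  refine ⟨?_, ?_, by simp, ?_, ?_⟩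
  · apply List.isChain_append.mpr
    refine ⟨hchain, List.isChain_singleton v, ?_⟩
    intro x hx y hy
    rw [getLast?_concat2] at hx
    simp only [List.head?_cons, Option.mem_some_iff] at hx hy
    subst hx; subst hy; exact hadj
  · rw [List.head?_append, hhead]; rfl
  · simp at hlen ⊢; omega
  · intro n a c ha hc
    by_cases h : n + 2 < (l' ++ [u, v']).length
    · rw [List.getElem?_append_left h] at hc
      rw [List.getElem?_append_left (by omega)] at ha
      exact hnb n a c ha hc
    · have hlt : n + 2 < (l' ++ [u, v'] ++ [v]).length := by
        by_contra h'
        rw [List.getElem?_eq_none (by omega)] at hc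
        cases hc
      have hn : n = l'.length := by simp at hlt hlen2 h ⊢; omega
      subst hn
      rw [getElem?_triple_mid] at ha
      rw [getElem?_triple_last] at hc
      cases ha; cases hc
      exact hne

variable [Fintype V] [DecidableEq V] {G : SimpleGraph V} [DecidableRel G.Adj]
  {b : V → ℕ} {M : Finset (Sym2 V)} {i : V} {t : ℕ} {N : Finset (List V)}

private lemma step_to_N (hM : IsPerfectBMatching G b M) (hN : IsTreeBMatching G b i t N)
    (l' : List V) (u v' : V) (hlen : (l' ++ [u, v']).length ≤ t)
    (hct : IsCTNode G i t (l' ++ [u, v'])) (hlN : (l' ++ [u, v']) ∉ N)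
    (hM' : s(u, v') ∈ M) :
    ∃ v, (l' ++ [u, v'] ++ [v]) ∈ N ∧ ¬ InLift G i t M (l' ++ [u, v'] ++ [v]) := by
  classical
  have hkey := hN.2 (l' ++ [u, v']) v' hct hlen (getLast?_concat2 l' u v')
  rw [if_neg hlN] at hkey
  set A := Finset.univ.filter (fun v => l' ++ [u, v'] ++ [v] ∈ N) with hA
  have hcardA : A.card = b v' := by simpa using hkey
  set FM := Finset.univ.filter (fun v => s(v', v) ∈ M) with hFM
  have hcardFM : FM.card = b v' := by rw [hFM, card_nbrs M v', hM.2 v']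
  have hu : u ∈ FM := by
    rw [hFM]; simp only [Finset.mem_filter, Finset.mem_univ, true_and]
    rw [Sym2.eq_swap]; exact hM'
  have hcardB : (FM.erase u).card = b v' - 1 := by
    rw [Finset.card_erase_of_mem hu, hcardFM]
  have hbpos : 1 ≤ b v' := by
    rw [← hcardFM]; exact Finset.card_pos.mpr ⟨u, hu⟩
  have hns : ¬ A ⊆ FM.erase u := by
    intro hsub
    have := Finset.card_le_card hsub
    omega
  obtain ⟨v, hvA, hvB⟩ := Finset.not_subset.mp hns
  have hvN : l' ++ [u, v'] ++ [v] ∈ N := (Finset.mem_filter.mp hvA).2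
  refine ⟨v, hvN, ?_⟩
  rintro ⟨hct2, e2, he2M, hle2⟩
  rw [concat3_eq, lastEdge?_concat2] at hle2
  have he2 : e2 = s(v', v) := by cases hle2; rfl
  have hvne : v ≠ u := by
    have h1 := getElem?_triple_mid l' u v' v
    have h2 := getElem?_triple_last l' u v' v
    exact (hct2.2.2.2.2 l'.length u v h1 h2).symm
  apply hvB
  rw [Finset.mem_erase]
  refine ⟨hvne, ?_⟩
  rw [hFM]; simp only [Finset.mem_filter, Finset.mem_univ, true_and]
  rw [← he2]; exact he2M

private lemma step_to_M (hM : IsPerfectBMatching G b M) (hN : IsTreeBMatching G b i t N)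
    (l' : List V) (u v' : V) (hlen : (l' ++ [u, v']).length ≤ t)
    (hct : IsCTNode G i t (l' ++ [u, v'])) (hlN : (l' ++ [u, v']) ∈ N)
    (hM' : s(u, v') ∉ M) :
    ∃ v, InLift G i t M (l' ++ [u, v'] ++ [v]) ∧ (l' ++ [u, v'] ++ [v]) ∉ N := by
  classical
  have hkey := hN.2 (l' ++ [u, v']) v' hct hlen (getLast?_concat2 l' u v')
  rw [if_pos hlN] at hkey
  set A := Finset.univ.filter (fun v => l' ++ [u, v'] ++ [v] ∈ N) with hA
  have hcardA : A.card + 1 = b v' := by omega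
  set FM := Finset.univ.filter (fun v => s(v', v) ∈ M) with hFM
  have hcardFM : FM.card = b v' := by rw [hFM, card_nbrs M v', hM.2 v']
  have hu : u ∉ FM := by
    rw [hFM]; simp only [Finset.mem_filter, Finset.mem_univ, true_and]
    rw [Sym2.eq_swap]; exact hM'
  have hns : ¬ FM ⊆ A := by
    intro hsub
    have := Finset.card_le_card hsub
    omega
  obtain ⟨v, hvFM, hvA⟩ := Finset.not_subset.mp hns
  have hvne : u ≠ v := fun h => hu (h ▸ hvFM)
  have hsvv : s(v', v) ∈ M := by
    rw [hFM] at hvFM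
    exact (Finset.mem_filter.mp hvFM).2
  have hadj : G.Adj v' v := by
    have := hM.1 hsvv
    rwa [SimpleGraph.mem_edgeFinset, SimpleGraph.mem_edgeSet] at this
  have hct3 : IsCTNode G i t (l' ++ [u, v'] ++ [v]) := isCTNode_append hct hlen hadj hvne
  refine ⟨v, ⟨hct3, s(v', v), hsvv, ?_⟩, fun h => hvA (by rw [hA]; simp only [Finset.mem_filter, Finset.mem_univ, true_and]; exact h)⟩
  rw [concat3_eq, lastEdge?_concat2]

private lemma root_step (hM : IsPerfectBMatching G b M) (hN : IsTreeBMatching G b i t N)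
    (ht : 1 ≤ t)
    (hdiff : ∃ v, G.Adj i v ∧ ¬ ([i, v] ∈ N ↔ s(i, v) ∈ M)) :
    (∃ v, InLift G i t M ([i] ++ [v]) ∧ ([i] ++ [v]) ∉ N) ∧
    (∃ v, ([i] ++ [v]) ∈ N ∧ ¬ InLift G i t M ([i] ++ [v])) := by
  classical
  have hiN : [i] ∉ N := by
    intro h
    have := (hN.1 [i] h).2
    simp at this
  have hkey := hN.2 [i] i (isCTNode_root i t) (by simpa) rfl
  rw [if_neg hiN] at hkey
  set A := Finset.univ.filter (fun v => [i] ++ [v] ∈ N) with hA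
  have hcardA : A.card = b i := by simpa using hkey
  set FM := Finset.univ.filter (fun v => s(i, v) ∈ M) with hFM
  have hcardFM : FM.card = b i := by rw [hFM, card_nbrs M i, hM.2 i]
  have hANB : A ≠ FM := by
    obtain ⟨v₀, hadj, hne⟩ := hdiff
    intro hAB
    apply hne
    have : v₀ ∈ A ↔ v₀ ∈ FM := by rw [hAB]
    rw [hA, hFM] at this
    simpa using this
  have hdiffMN : (FM \ A).Nonempty := by
    rw [Finset.sdiff_nonempty]
    intro hsub
    exact hANB (Finset.eq_of_subset_of_card_le hsub (by omega)).symm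
  have hdiffNM : (A \ FM).Nonempty := by
    rw [Finset.sdiff_nonempty]
    intro hsub
    exact hANB (Finset.eq_of_subset_of_card_le hsub (by omega))
  constructor
  · obtain ⟨vf, hvf⟩ := hdiffMN
    rw [Finset.mem_sdiff, hFM, hA] at hvf
    simp only [Finset.mem_filter, Finset.mem_univ, true_and] at hvf
    have hadj : G.Adj i vf := by
      have := hM.1 hvf.1
      rwa [SimpleGraph.mem_edgeFinset, SimpleGraph.mem_edgeSet] at this
    refine ⟨vf, ⟨?_, s(i, vf), hvf.1, ?_⟩, hvf.2⟩
    · simpa using isCTNode_pair hadj ht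
    · simpa using lastEdge?_concat2 ([] : List V) i vf
  · obtain ⟨vg, hvg⟩ := hdiffNM
    rw [Finset.mem_sdiff, hA, hFM] at hvg
    simp only [Finset.mem_filter, Finset.mem_univ, true_and] at hvg
    refine ⟨vg, hvg.1, ?_⟩
    rintro ⟨-, e, heM, hle⟩
    have : lastEdge? ([i] ++ [vg]) = some s(i, vg) := by
      simpa using lastEdge?_concat2 ([] : List V) i vg
    rw [this] at hle
    cases hle
    exact hvg.2 heM

private def buildP (i : V) (s : ℕ → List V → V) : ℕ → List V
  | 0 => [i]
  | m + 1 => buildP i s m ++ [s m (buildP i s m)]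

private lemma buildP_length (i : V) (s : ℕ → List V → V) (m : ℕ) :
    (buildP i s m).length = m + 1 := by
  induction m with
  | zero => rfl
  | succ m ih => simp [buildP, ih]

private lemma Fpath_succ (i : V) (f : ℕ → V) (m : ℕ) :
    Fpath i f (m + 1) = Fpath i f m ++ [f (m + 1)] := by
  simp [Fpath, List.range_succ]

private lemma fpath_buildP (i : V) (s : ℕ → List V → V) (m : ℕ) :
    Fpath i (fun n => (buildP i s n).getLastD i) m = buildP i s m := by
  induction m with
  | zero => simp [Fpath, buildP]
  | succ m ih =>
    rw [Fpath_succ, ih]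
    show buildP i s m ++ [(buildP i s (m + 1)).getLastD i] = _
    rw [show buildP i s (m + 1) = buildP i s m ++ [s m (buildP i s m)] from rfl]
    rw [List.getLastD_concat]

end AuxStmt10

/-- let `𝓜*` be the lift of the unique optimal perfect b-matching `M*` to
the computation tree `T_i^t` and let `N*` be a minimum weight perfect tree-b-matching of
`T_i^t`.  If they select different edges at the root, then there is a path of length `2t`
through the root (two downward paths given by `f` and `g`) whose edges alternately belong
to `N* \ 𝓜*` and `𝓜* \ N*`. -/
theorem stmt10 [Fintype V] [DecidableEq V] (G : SimpleGraph V) [DecidableRel G.Adj]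
    (w : Sym2 V → ℝ) (b : V → ℕ) (M : Finset (Sym2 V))
    (hb : ∀ v, b v < G.degree v)
    (hM : IsPerfectBMatching G b M)
    (hMopt : ∀ M', IsPerfectBMatching G b M' → matchWeight w M ≤ matchWeight w M')
    (huniq : ∀ M', IsPerfectBMatching G b M' →
      matchWeight w M' = matchWeight w M → M' = M)
    (i : V) (t : ℕ) (N : Finset (List V))
    (hN : IsTreeBMatching G b i t N)
    (hNopt : ∀ N', IsTreeBMatching G b i t N' → treeWeight w N ≤ treeWeight w N')
    (hdiff : ∃ v, G.Adj i v ∧ ¬ ([i, v] ∈ N ↔ s(i, v) ∈ M)) :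
    ∃ f g : ℕ → V,
      (∀ k, k < t → Even k →
        (InLift G i t M (Fpath i f (k + 1)) ∧ Fpath i f (k + 1) ∉ N) ∧
        (Fpath i g (k + 1) ∈ N ∧ ¬ InLift G i t M (Fpath i g (k + 1)))) ∧
      (∀ k, k < t → ¬ Even k →
        (Fpath i f (k + 1) ∈ N ∧ ¬ InLift G i t M (Fpath i f (k + 1))) ∧
        (InLift G i t M (Fpath i g (k + 1)) ∧ Fpath i g (k + 1) ∉ N)) := by
  classical
  rcases Nat.eq_zero_or_pos t with ht0 | ht
  · subst ht0
    exact ⟨fun _ => i, fun _ => i, fun k hk => absurd hk (by omega),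
      fun k hk => absurd hk (by omega)⟩
  obtain ⟨hrootA, hrootB⟩ := root_step hM hN ht hdiff
  set sA : List V → V := fun l =>
    if h : ∃ v, InLift G i t M (l ++ [v]) ∧ (l ++ [v]) ∉ N then h.choose else i with hsA
  set sB : List V → V := fun l =>
    if h : ∃ v, (l ++ [v]) ∈ N ∧ ¬ InLift G i t M (l ++ [v]) then h.choose else i with hsB
  have hsA_spec : ∀ l, (∃ v, InLift G i t M (l ++ [v]) ∧ (l ++ [v]) ∉ N) →
      InLift G i t M (l ++ [sA l]) ∧ (l ++ [sA l]) ∉ N := by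
    intro l h
    simp only [hsA]
    rw [dif_pos h]
    exact h.choose_spec
  have hsB_spec : ∀ l, (∃ v, (l ++ [v]) ∈ N ∧ ¬ InLift G i t M (l ++ [v])) →
      (l ++ [sB l]) ∈ N ∧ ¬ InLift G i t M (l ++ [sB l]) := by
    intro l h
    simp only [hsB]
    rw [dif_pos h]
    exact h.choose_spec
  have stepB_ex : ∀ l, 2 ≤ l.length → l.length ≤ t → InLift G i t M l → l ∉ N →
      (l ++ [sB l]) ∈ N ∧ ¬ InLift G i t M (l ++ [sB l]) := by
    intro l h2 hlt hlift hln
    obtain ⟨l', u, v', rfl⟩ := two_le_decomp l h2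
    obtain ⟨hct, e, heM, hle⟩ := hlift
    rw [lastEdge?_concat2] at hle
    have he : e = s(u, v') := (Option.some.inj hle).symm
    exact hsB_spec _ (step_to_N hM hN l' u v' hlt hct hln (by rw [he] at heM; exact heM))
  have stepA_ex : ∀ l, l ∈ N → l.length ≤ t → ¬ InLift G i t M l →
      InLift G i t M (l ++ [sA l]) ∧ (l ++ [sA l]) ∉ N := by
    intro l hln hlt hnl
    obtain ⟨hct, h2⟩ := hN.1 l hln
    obtain ⟨l', u, v', rfl⟩ := two_le_decomp l h2
    have hsM : s(u, v') ∉ M := fun hm => hnl ⟨hct, s(u, v'), hm, lastEdge?_concat2 _ _ _⟩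
    exact hsA_spec _ (step_to_M hM hN l' u v' hlt hct hln hsM)
  set sF : ℕ → List V → V := fun m l => if m % 2 = 0 then sA l else sB l with hsF
  set sG : ℕ → List V → V := fun m l => if m % 2 = 0 then sB l else sA l with hsG
  set Lf := buildP i sF with hLfdef
  set Lg := buildP i sG with hLgdef
  have hLf_len : ∀ m, (Lf m).length = m + 1 := fun m => buildP_length i sF m
  have hLg_len : ∀ m, (Lg m).length = m + 1 := fun m => buildP_length i sG m
  have hLf0 : Lf 0 = [i] := rfl
  have hLg0 : Lg 0 = [i] := rfl
  have hLfsucc : ∀ m, Lf (m + 1) = Lf m ++ [sF m (Lf m)] := fun m => rfl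
  have hLgsucc : ∀ m, Lg (m + 1) = Lg m ++ [sG m (Lg m)] := fun m => rfl
  have hInvF : ∀ m, m < t →
      (m % 2 = 0 → InLift G i t M (Lf (m + 1)) ∧ Lf (m + 1) ∉ N) ∧
      (m % 2 = 1 → Lf (m + 1) ∈ N ∧ ¬ InLift G i t M (Lf (m + 1))) := by
    intro m
    induction m with
    | zero =>
      intro _
      refine ⟨fun _ => ?_, fun h => by omega⟩
      have hstep : sF 0 [i] = sA [i] := by simp [hsF]
      rw [hLfsucc 0, hLf0, hstep]
      exact hsA_spec [i] hrootA
    | succ m ih =>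
      intro hmt
      have ihm := ih (by omega)
      have hlen1 : (Lf (m + 1)).length = m + 2 := hLf_len (m + 1)
      rcases Nat.mod_two_eq_zero_or_one m with hp | hp
      · have h1 := ihm.1 hp
        have hm1 : (m + 1) % 2 = 1 := by omega
        refine ⟨fun h => by omega, fun _ => ?_⟩
        have hstep : sF (m + 1) (Lf (m + 1)) = sB (Lf (m + 1)) := by simp [hsF, hm1]
        rw [hLfsucc (m + 1), hstep]
        exact stepB_ex (Lf (m + 1)) (by omega) (by omega) h1.1 h1.2
      · have h1 := ihm.2 hp
        have hm1 : (m + 1) % 2 = 0 := by omega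
        refine ⟨fun _ => ?_, fun h => by omega⟩
        have hstep : sF (m + 1) (Lf (m + 1)) = sA (Lf (m + 1)) := by simp [hsF, hm1]
        rw [hLfsucc (m + 1), hstep]
        exact stepA_ex (Lf (m + 1)) h1.1 (by omega) h1.2
  have hInvG : ∀ m, m < t →
      (m % 2 = 0 → Lg (m + 1) ∈ N ∧ ¬ InLift G i t M (Lg (m + 1))) ∧
      (m % 2 = 1 → InLift G i t M (Lg (m + 1)) ∧ Lg (m + 1) ∉ N) := by
    intro m
    induction m with
    | zero =>
      intro _
      refine ⟨fun _ => ?_, fun h => by omega⟩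
      have hstep : sG 0 [i] = sB [i] := by simp [hsG]
      rw [hLgsucc 0, hLg0, hstep]
      exact hsB_spec [i] hrootB
    | succ m ih =>
      intro hmt
      have ihm := ih (by omega)
      have hlen1 : (Lg (m + 1)).length = m + 2 := hLg_len (m + 1)
      rcases Nat.mod_two_eq_zero_or_one m with hp | hp
      · have h1 := ihm.1 hp
        have hm1 : (m + 1) % 2 = 1 := by omega
        refine ⟨fun h => by omega, fun _ => ?_⟩
        have hstep : sG (m + 1) (Lg (m + 1)) = sA (Lg (m + 1)) := by simp [hsG, hm1]
        rw [hLgsucc (m + 1), hstep]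
        exact stepA_ex (Lg (m + 1)) h1.1 (by omega) h1.2
      · have h1 := ihm.2 hp
        have hm1 : (m + 1) % 2 = 0 := by omega
        refine ⟨fun _ => ?_, fun h => by omega⟩
        have hstep : sG (m + 1) (Lg (m + 1)) = sB (Lg (m + 1)) := by simp [hsG, hm1]
        rw [hLgsucc (m + 1), hstep]
        exact stepB_ex (Lg (m + 1)) (by omega) (by omega) h1.1 h1.2
  refine ⟨fun n => (Lf n).getLastD i, fun n => (Lg n).getLastD i, ?_, ?_⟩
  · intro k hk hke
    have hkp : k % 2 = 0 := Nat.even_iff.mp hke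
    have hf := (hInvF k hk).1 hkp
    have hg := (hInvG k hk).1 hkp
    rw [show Fpath i (fun n => (Lf n).getLastD i) (k + 1) = Lf (k + 1) from by
      rw [hLfdef]; exact fpath_buildP i sF (k + 1)]
    rw [show Fpath i (fun n => (Lg n).getLastD i) (k + 1) = Lg (k + 1) from by
      rw [hLgdef]; exact fpath_buildP i sG (k + 1)]
    exact ⟨hf, hg⟩
  · intro k hk hke
    have hkp : k % 2 = 1 := Nat.not_even_iff.mp hke
    have hf := (hInvF k hk).2 hkp
    have hg := (hInvG k hk).2 hkp
    rw [show Fpath i (fun n => (Lf n).getLastD i) (k + 1) = Lf (k + 1) from by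
      rw [hLfdef]; exact fpath_buildP i sF (k + 1)]
    rw [show Fpath i (fun n => (Lg n).getLastD i) (k + 1) = Lg (k + 1) from by
      rw [hLgdef]; exact fpath_buildP i sG (k + 1)]
    exact ⟨hf, hg⟩
end

section
/- If the LP relaxation of the minimum weight perfect b-matching problem has no fractional solution and w_ij = y*_i + y*_j holds for every edge {i,j} ∈ E (so no gap ε exists), then for any vertex i and any level t > n, the edges adjacent to the root in the minimum weight perfect tree-b-matching of the computation tree T_i^t are exactly the M*-edges at i; i.e., BP is correct after n iterations. -/
set_option autoImplicit false

open Finset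

variable {V : Type*}

set_option maxHeartbeats 1000000
section AuxLemmas
-- L1 telescoping
lemma telescope_aux (σ : ℕ → ℝ) (hσ : ∀ s, σ (s+1) = -σ s) (g : ℕ → ℝ) (a : ℕ) :
    ∀ c, a ≤ c → ∑ s ∈ Finset.Ico a c, σ s * (g s + g (s+1)) = σ a * g a - σ c * g c := by
  intro c hc
  induction c, hc using Nat.le_induction with
  | base => simp
  | succ c hc ih =>
    rw [Finset.sum_Ico_succ_top hc, ih, hσ c]
    ring

-- L2 fiber count sum
lemma sum_count_aux {α β : Type*} [DecidableEq β] (s : Finset α) (t : Finset β) (f : α → β)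
    (hmap : ∀ x ∈ s, f x ∈ t) (F : β → ℝ) :
    ∑ e ∈ t, F e * ((s.filter (fun x => f x = e)).card : ℝ) = ∑ x ∈ s, F (f x) := by
  rw [← Finset.sum_fiberwise_of_maps_to hmap (fun x => F (f x))]
  refine Finset.sum_congr rfl fun e _ => ?_
  rw [Finset.sum_congr rfl (fun x hx => by rw [(Finset.mem_filter.mp hx).2]),
    Finset.sum_const, nsmul_eq_mul, mul_comm]

-- L0
lemma sum_indic_filter [Fintype V] [DecidableEq V] (G : SimpleGraph V) [DecidableRel G.Adj]
    (M : Finset (Sym2 V)) (hsub : M ⊆ G.edgeFinset) (v : V) :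
    ∑ e ∈ G.edgeFinset.filter (fun e => v ∈ e), indic M e = (degIn M v : ℝ) := by
  unfold indic degIn
  rw [Finset.sum_boole]
  congr 1
  congr 1
  ext e
  simp only [Finset.mem_filter]
  constructor
  · rintro ⟨⟨_, hv⟩, hM⟩; exact ⟨hM, hv⟩
  · rintro ⟨hM, hv⟩; exact ⟨⟨hsub hM, hv⟩, hM⟩

-- L3 : no long alternating walk
lemma no_long_alt_walk [Fintype V] [DecidableEq V] (G : SimpleGraph V) [DecidableRel G.Adj]
    (w : Sym2 V → ℝ) (b : V → ℕ) (M : Finset (Sym2 V)) (y : V → ℝ)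
    (hM : IsPerfectBMatching G b M)
    (hnofrac : ∀ x', LPFeasible G b x' →
      LPCost G w x' = LPCost G w (indic M) → x' = indic M)
    (heq : ∀ i j, G.Adj i j → w s(i, j) = y i + y j)
    (t : ℕ) (ht : Fintype.card V < t) (p : ℕ → V)
    (hadj : ∀ s, s < 2*t → G.Adj (p s) (p (s+1)))
    (hm : ∀ s, s < 2*t → (s(p s, p (s+1)) ∈ M ↔ (s + t) % 2 = 0)) : False := by
  classical
  -- pigeonhole
  obtain ⟨j1, hj1, j2, hj2, hjne, hpeq⟩ :=
    Finset.exists_ne_map_eq_of_card_lt_of_maps_to (s := Finset.range (t+1)) (t := Finset.univ)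
      (by simp only [Finset.card_range, Finset.card_univ]; omega) (fun j _ => Finset.mem_univ (p (2*j)))
  simp only [Finset.mem_range] at hj1 hj2
  wlog hlt : j1 < j2 generalizing j1 j2
  · exact this j2 j1 hjne.symm hpeq.symm hj2 hj1 (by omega)
  set a := 2*j1 with ha
  set c := 2*j2 with hc
  have hac : a < c := by omega
  have hc2t : c ≤ 2*t := by omega
  set σ : ℕ → ℝ := fun s => if (s + t) % 2 = 0 then (-1 : ℝ) else 1 with hσdef
  have hσalt : ∀ s, σ (s+1) = -σ s := by
    intro s
    rcases Nat.even_or_odd (s + t) with h | h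
    · have h1 : (s + t) % 2 = 0 := Nat.even_iff.mp h
      have h2 : (s + 1 + t) % 2 = 1 := by omega
      simp [hσdef, h1, h2]
    · have h1 : (s + t) % 2 = 1 := Nat.odd_iff.mp h
      have h2 : (s + 1 + t) % 2 = 0 := by omega
      simp [hσdef, h1, h2]
  set τ : Sym2 V → ℝ := fun e => if e ∈ M then (-1 : ℝ) else 1 with hτdef
  set es : ℕ → Sym2 V := fun s => s(p s, p (s+1)) with hesdef
  have hτσ : ∀ s ∈ Finset.Ico a c, τ (es s) = σ s := by
    intro s hs
    rw [Finset.mem_Ico] at hs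
    have hs2 : s < 2*t := by omega
    by_cases h : (s + t) % 2 = 0
    · simp [hτdef, hσdef, hesdef, h, (hm s hs2).mpr h]
    · have : s(p s, p (s+1)) ∉ M := fun hmem => h ((hm s hs2).mp hmem)
      simp [hτdef, hσdef, hesdef, h, this]
  set cnt : Sym2 V → ℕ := fun e => ((Finset.Ico a c).filter (fun s => es s = e)).card with hcntdef
  have hmapsto : ∀ s ∈ Finset.Ico a c, es s ∈ G.edgeFinset := by
    intro s hs
    rw [Finset.mem_Ico] at hs
    exact SimpleGraph.mem_edgeFinset.mpr ((G.mem_edgeSet).mpr (hadj s (by omega)))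
  have hkey : ∀ F : Sym2 V → ℝ,
      ∑ e ∈ G.edgeFinset, F e * (cnt e : ℝ) = ∑ s ∈ Finset.Ico a c, F (es s) :=
    fun F => sum_count_aux _ _ _ hmapsto F
  set ε : ℝ := 1/(2*t+1) with hεdef
  have hεpos : 0 < ε := by positivity
  have hcntle : ∀ e, (cnt e : ℝ) ≤ 2*t := by
    intro e
    have h1 : cnt e ≤ (Finset.Ico a c).card := Finset.card_filter_le _ _
    have h2 : (Finset.Ico a c).card = c - a := Nat.card_Ico a c
    have : cnt e ≤ 2*t := by omega
    exact_mod_cast this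
  have hεcnt : ∀ e, 0 ≤ ε * (cnt e : ℝ) ∧ ε * (cnt e : ℝ) ≤ 1 := by
    intro e
    constructor
    · positivity
    · rw [hεdef]
      rw [div_mul_eq_mul_div, div_le_one (by positivity)]
      have := hcntle e
      linarith
  set x' : Sym2 V → ℝ := fun e => indic M e + ε * (τ e * (cnt e : ℝ)) with hx'def
  -- telescoping instance
  have htel : ∀ g : ℕ → ℝ, g a = g c →
      ∑ s ∈ Finset.Ico a c, σ s * (g s + g (s+1)) = 0 := by
    intro g hg
    rw [telescope_aux σ hσalt g a c (le_of_lt hac), hg]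
    have hσac : σ a = σ c := by
      have : (a + t) % 2 = (c + t) % 2 := by omega
      simp [hσdef, this]
    rw [hσac]; ring
  have hne : p a ≠ p (a+1) := (hadj a (by omega)).ne
  have hfeas : LPFeasible G b x' := by
    refine ⟨?_, ?_, ?_⟩
    · intro e he
      have h1 : e ∉ M := fun h => he (hM.1 h)
      have h2 : cnt e = 0 := by
        rw [hcntdef, Finset.card_eq_zero, Finset.filter_eq_empty_iff]
        intro s hs hes
        exact he (hes ▸ hmapsto s hs)
      simp [hx'def, indic, h1, h2]
    · intro e he
      rcases hεcnt e with ⟨h0, h1⟩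
      by_cases hem : e ∈ M
      · simp only [hx'def, indic, hem, if_pos, hτdef]
        constructor <;> [nlinarith; nlinarith]
      · simp only [hx'def, indic, hem, if_neg, hτdef, if_false]
        constructor <;> [nlinarith; nlinarith]
    · intro v
      have hsplit : ∑ e ∈ G.edgeFinset.filter (fun e => v ∈ e), x' e
          = (degIn M v : ℝ) + ε * ∑ e ∈ G.edgeFinset.filter (fun e => v ∈ e), τ e * (cnt e : ℝ) := by
        rw [hx'def]
        simp only []
        rw [Finset.sum_add_distrib, sum_indic_filter G M hM.1 v, Finset.mul_sum]
      rw [hsplit, hM.2 v]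
      have hrest : ∑ e ∈ G.edgeFinset.filter (fun e => v ∈ e), τ e * (cnt e : ℝ) = 0 := by
        have hext : ∑ e ∈ G.edgeFinset.filter (fun e => v ∈ e), τ e * (cnt e : ℝ)
            = ∑ e ∈ G.edgeFinset, (if v ∈ e then τ e else 0) * (cnt e : ℝ) := by
          rw [Finset.sum_filter]
          refine Finset.sum_congr rfl fun e _ => ?_
          by_cases h : v ∈ e <;> simp [h]
        rw [hext, hkey]
        have hterm : ∀ s ∈ Finset.Ico a c,
            (if v ∈ es s then τ (es s) else 0)
              = σ s * ((if p s = v then (1:ℝ) else 0) + (if p (s+1) = v then (1:ℝ) else 0)) := by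
          intro s hs
          rw [Finset.mem_Ico] at hs
          have hnes : p s ≠ p (s+1) := (hadj s (by omega)).ne
          by_cases h1 : p s = v <;> by_cases h2 : p (s+1) = v
          · exact absurd (h1.trans h2.symm) hnes
          · have hv : v ∈ es s := by rw [hesdef]; simp [Sym2.mem_iff, h1.symm]
            rw [if_pos hv, hτσ s (Finset.mem_Ico.mpr hs), if_pos h1, if_neg h2]; ring
          · have hv : v ∈ es s := by rw [hesdef]; simp [Sym2.mem_iff, h2.symm]
            rw [if_pos hv, hτσ s (Finset.mem_Ico.mpr hs), if_neg h1, if_pos h2]; ring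
          · have hv : v ∉ es s := by
              rw [hesdef]; simp only [Sym2.mem_iff]
              push_neg
              exact ⟨fun h => h1 h.symm, fun h => h2 h.symm⟩
            rw [if_neg hv, if_neg h1, if_neg h2]; ring
        rw [Finset.sum_congr rfl hterm]
        exact htel (fun s => if p s = v then (1:ℝ) else 0) (by simp only [hpeq])
      rw [hrest]; ring
  have hcost : LPCost G w x' = LPCost G w (indic M) := by
    unfold LPCost
    have : ∀ e ∈ G.edgeFinset, w e * x' e = w e * indic M e + (w e * τ e) * (ε * (cnt e : ℝ)) := by
      intro e _; rw [hx'def]; ring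
    rw [Finset.sum_congr rfl this, Finset.sum_add_distrib]
    have h2 : ∑ e ∈ G.edgeFinset, (w e * τ e) * (ε * (cnt e : ℝ))
        = ε * ∑ e ∈ G.edgeFinset, (w e * τ e) * (cnt e : ℝ) := by
      rw [Finset.mul_sum]; exact Finset.sum_congr rfl fun e _ => by ring
    rw [h2, hkey]
    have hterm : ∀ s ∈ Finset.Ico a c,
        w (es s) * τ (es s) = σ s * (y (p s) + y (p (s+1))) := by
      intro s hs
      have hs' := Finset.mem_Ico.mp hs
      rw [hτσ s hs, hesdef]
      simp only []
      rw [heq _ _ (hadj s (by omega))]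
      ring
    rw [Finset.sum_congr rfl hterm, htel (fun s => y (p s)) (by simp only [hpeq])]
    ring
  have hxeq := hnofrac x' hfeas hcost
  have hcnta : 1 ≤ cnt (es a) := by
    rw [hcntdef, Nat.one_le_iff_ne_zero, ← Nat.pos_iff_ne_zero, Finset.card_pos]
    exact ⟨a, Finset.mem_filter.mpr ⟨Finset.mem_Ico.mpr ⟨le_refl a, hac⟩, rfl⟩⟩
  have : x' (es a) ≠ indic M (es a) := by
    rw [hx'def]
    simp only []
    intro h
    have h1 : ε * (τ (es a) * (cnt (es a) : ℝ)) = 0 := by linarith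
    have h2 : τ (es a) ≠ 0 := by
      rw [hτdef]; by_cases h : es a ∈ M <;> simp [h]
    have h3 : (cnt (es a) : ℝ) ≠ 0 := by
      have : (1:ℝ) ≤ (cnt (es a) : ℝ) := by exact_mod_cast hcnta
      linarith
    rcases mul_eq_zero.mp h1 with h | h
    · exact absurd h (ne_of_gt hεpos)
    · rcases mul_eq_zero.mp h with h | h
      · exact h2 h
      · exact h3 h
  exact this (congrFun hxeq (es a))

-- chain' helper
lemma chain'_getElem? {α : Type*} {R : α → α → Prop} {l : List α} (h : l.Chain' R) {n : ℕ}
    {a b : α} (ha : l[n]? = some a) (hb : l[n+1]? = some b) : R a b := by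
  rw [List.getElem?_eq_some_iff] at ha hb
  obtain ⟨h1, rfl⟩ := ha; obtain ⟨h2, rfl⟩ := hb
  exact List.isChain_iff_getElem.mp h n (by omega)

-- L4: counting M-neighbors
lemma card_sym_filter [Fintype V] [DecidableEq V] (G : SimpleGraph V) [DecidableRel G.Adj]
    (M : Finset (Sym2 V)) (hsub : M ⊆ G.edgeFinset) (v' : V) :
    (Finset.univ.filter (fun x => s(v', x) ∈ M)).card = degIn M v' := by
  unfold degIn
  apply Finset.card_bij (fun x _ => s(v', x))
  · intro x hx
    rw [Finset.mem_filter] at hx ⊢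
    exact ⟨hx.2, by simp [Sym2.mem_iff]⟩
  · intro x hx y hy hxy
    rcases Sym2.eq_iff.mp hxy with ⟨_, h⟩ | ⟨h1, h2⟩
    · exact h
    · exact h2.trans h1
  · intro e he
    rw [Finset.mem_filter] at he
    obtain ⟨heM, hve⟩ := he
    induction e with
    | _ a c =>
      rcases Sym2.mem_iff.mp hve with rfl | rfl
      · exact ⟨c, Finset.mem_filter.mpr ⟨Finset.mem_univ _, heM⟩, rfl⟩
      · exact ⟨a, Finset.mem_filter.mpr ⟨Finset.mem_univ _, by rwa [Sym2.eq_swap]⟩, Sym2.eq_swap⟩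

lemma ct_single (G : SimpleGraph V) (i : V) (t : ℕ) : IsCTNode G i t [i] := by
  refine ⟨List.isChain_singleton i, rfl, by simp, by simp, ?_⟩
  intro n a c _ hc
  rw [List.getElem?_eq_some_iff] at hc
  obtain ⟨h, _⟩ := hc
  simp at h

lemma ct_pair (G : SimpleGraph V) (i v : V) (t : ℕ) (h : G.Adj i v) (ht : 1 ≤ t) :
    IsCTNode G i t [i, v] := by
  refine ⟨List.isChain_pair.mpr h, rfl, by simp, by show 2 ≤ t + 1; omega, ?_⟩
  intro n a c _ hc
  rw [List.getElem?_eq_some_iff] at hc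
  obtain ⟨hlt, _⟩ := hc
  simp at hlt

lemma ct_append (G : SimpleGraph V) (i : V) (t : ℕ) {l : List V} (hl : IsCTNode G i t l)
    (hlen : l.length ≤ t) (h2 : 2 ≤ l.length) {u v' x : V}
    (hu : l[l.length - 2]? = some u) (hv : l[l.length - 1]? = some v')
    (hadj : G.Adj v' x) (hne : u ≠ x) : IsCTNode G i t (l ++ [x]) := by
  obtain ⟨hch, hhd, hl1, hlt, hidx⟩ := hl
  refine ⟨?_, ?_, ?_, ?_, ?_⟩
  · rw [List.Chain', List.isChain_append]
    refine ⟨hch, List.isChain_singleton x, ?_⟩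
    intro a ha b hb
    rw [List.getLast?_eq_getElem?, hv] at ha
    simp only [List.head?_cons, Option.mem_some_iff] at ha hb
    rw [← ha, ← hb]
    exact hadj
  · rw [List.head?_append, hhd]; rfl
  · simp
  · simp only [List.length_append, List.length_cons, List.length_nil]; omega
  · intro n a c hna hnc
    have hlt2 : n + 2 < l.length + 1 := by
      have h' := (List.getElem?_eq_some_iff.mp hnc).1
      simpa using h'
    by_cases hcase : n + 2 < l.length
    · exact hidx n a c (by rwa [List.getElem?_append_left (by omega)] at hna)
        (by rwa [List.getElem?_append_left hcase] at hnc)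
    · have hn2 : n + 2 = l.length := by omega
      have hcx : c = x := by
        have h3 := List.getElem?_concat_length (l := l) (a := x)
        rw [← hn2] at h3
        rw [h3] at hnc
        exact (Option.some_inj.mp hnc).symm
      have hau : a = u := by
        have hna' : l[n]? = some a := by rwa [List.getElem?_append_left (by omega)] at hna
        have hn' : n = l.length - 2 := by omega
        rw [hn', hu] at hna'
        exact (Option.some_inj.mp hna').symm
      rw [hau, hcx]; exact hne

/-- Extension property: `x` extends the node `l` down one level, switching sides. -/
def Qprop [Fintype V] [DecidableEq V] (G : SimpleGraph V) (i : V) (t : ℕ)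
    (N : Finset (List V)) (M : Finset (Sym2 V)) (l : List V) (x : V) : Prop :=
  IsCTNode G i t (l ++ [x]) ∧ ((l ++ [x]) ∈ N ↔ ¬ (l ∈ N)) ∧
    ∀ v', l[l.length - 1]? = some v' → (s(v', x) ∈ M ↔ l ∈ N)

lemma ext_step [Fintype V] [DecidableEq V] (G : SimpleGraph V) [DecidableRel G.Adj]
    (b : V → ℕ) (M : Finset (Sym2 V)) (hM : IsPerfectBMatching G b M)
    (i : V) (t : ℕ) (N : Finset (List V)) (hN : IsTreeBMatching G b i t N)
    (l : List V) (hl : IsCTNode G i t l) (hlen : l.length ≤ t) (h2 : 2 ≤ l.length)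
    (u v' : V) (hu : l[l.length - 2]? = some u) (hv : l[l.length - 1]? = some v')
    (hdiff : (l ∈ N) ↔ s(u, v') ∉ M) :
    ∃ x, Qprop G i t N M l x := by
  classical
  have hlast : l.getLast? = some v' := by rw [List.getLast?_eq_getElem?]; exact hv
  have hcount := hN.2 l v' hl hlen hlast
  have hbv : degIn M v' = b v' := hM.2 v'
  set A : Finset V := Finset.univ.filter (fun x => l ++ [x] ∈ N) with hA
  by_cases hln : l ∈ N
  · -- l ∈ N, parent edge not in M; extend by an M-edge not in N
    have huvM : s(u, v') ∉ M := hdiff.mp hln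
    have hcardA : 1 + A.card = b v' := by rwa [if_pos hln] at hcount
    set B : Finset V := Finset.univ.filter (fun x => s(v', x) ∈ M) with hB
    have hcardB : B.card = b v' := by rw [hB, card_sym_filter G M hM.1 v']; exact hbv
    have hBA : ¬ (B ⊆ A) := by
      intro hsub
      have := Finset.card_le_card hsub
      omega
    obtain ⟨x, hxB, hxA⟩ := Finset.not_subset.mp hBA
    rw [hB, Finset.mem_filter] at hxB
    have hxM : s(v', x) ∈ M := hxB.2
    have hxN : l ++ [x] ∉ N := by
      rw [hA, Finset.mem_filter, not_and] at hxA
      exact hxA (Finset.mem_univ x)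
    have hxu : u ≠ x := by
      rintro rfl
      exact huvM (by rwa [Sym2.eq_swap] at hxM)
    have hadj : G.Adj v' x := (G.mem_edgeSet).mp (SimpleGraph.mem_edgeFinset.mp (hM.1 hxM))
    refine ⟨x, ct_append G i t hl hlen h2 hu hv hadj hxu, ?_, ?_⟩
    · constructor
      · intro h; exact absurd h hxN
      · intro h; exact absurd hln h
    · intro v'' hv''
      rw [hv] at hv''
      rw [← Option.some_inj.mp hv'']
      exact ⟨fun _ => hln, fun _ => hxM⟩
  · -- l ∉ N, parent edge in M; extend by an N-edge not in M
    have huvM : s(u, v') ∈ M := by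
      by_contra h
      exact hln (hdiff.mpr h)
    have hcardA : A.card = b v' := by rwa [if_neg hln, zero_add] at hcount
    set B : Finset V := Finset.univ.filter (fun x => s(v', x) ∈ M) with hB
    have hcardB : B.card = b v' := by rw [hB, card_sym_filter G M hM.1 v']; exact hbv
    have huB : u ∈ B := by
      rw [hB, Finset.mem_filter]
      exact ⟨Finset.mem_univ u, by rwa [Sym2.eq_swap]⟩
    set B' : Finset V := B.erase u with hB'
    have hcardB' : B'.card < b v' := by
      rw [hB', Finset.card_erase_of_mem huB, hcardB]
      have : 1 ≤ b v' := by rw [← hcardB]; exact Finset.card_pos.mpr ⟨u, huB⟩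
      omega
    have hBA : ¬ (A ⊆ B') := by
      intro hsub
      have := Finset.card_le_card hsub
      omega
    obtain ⟨x, hxA, hxB'⟩ := Finset.not_subset.mp hBA
    rw [hA, Finset.mem_filter] at hxA
    have hxN : l ++ [x] ∈ N := hxA.2
    have hCT : IsCTNode G i t (l ++ [x]) := (hN.1 _ hxN).1
    have hxu : u ≠ x := by
      have hidx := hCT.2.2.2.2
      have hn2 : l.length - 2 + 2 = l.length := by omega
      refine hidx (l.length - 2) u x ?_ ?_
      · rwa [List.getElem?_append_left (by omega)]
      · rw [hn2]
        exact List.getElem?_concat_length (l := l) (a := x)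
    have hxM : s(v', x) ∉ M := by
      intro hmem
      apply hxB'
      rw [hB', Finset.mem_erase, hB, Finset.mem_filter]
      exact ⟨fun h => hxu h.symm, Finset.mem_univ x, hmem⟩
    refine ⟨x, hCT, ?_, ?_⟩
    · exact ⟨fun _ => hln, fun _ => hxN⟩
    · intro v'' hv''
      rw [hv] at hv''
      rw [← Option.some_inj.mp hv'']
      constructor
      · intro h; exact absurd h hxM
      · intro h; exact absurd h hln

open Classical in
/-- One step of the downward construction. -/
noncomputable def stepFn [Fintype V] [DecidableEq V] (G : SimpleGraph V) (i : V) (t : ℕ)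
    (N : Finset (List V)) (M : Finset (Sym2 V)) : List V → List V :=
  fun l => if h : ∃ x, Qprop G i t N M l x then l ++ [h.choose] else l

lemma branch_lemma [Fintype V] [DecidableEq V] (G : SimpleGraph V) [DecidableRel G.Adj]
    (b : V → ℕ) (M : Finset (Sym2 V)) (hM : IsPerfectBMatching G b M)
    (i : V) (t : ℕ) (N : Finset (List V)) (hN : IsTreeBMatching G b i t N)
    (ht2 : 2 ≤ t) (v : V) (hvCT : IsCTNode G i t [i, v]) (cN : Prop)
    (hvN : ([i, v] ∈ N) ↔ cN) (hvM : s(i, v) ∈ M ↔ ¬ cN) :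
    ∃ q : ℕ → V, q 0 = i ∧ (∀ j, j < t → G.Adj (q j) (q (j + 1))) ∧
      (∀ j, j < t → (s(q j, q (j + 1)) ∈ M ↔ (cN ↔ Odd j))) := by
  classical
  set r : ℕ → List V := fun k => (stepFn G i t N M)^[k] [i, v] with hr
  have hr0 : r 0 = [i, v] := rfl
  have hrsucc : ∀ k, r (k + 1) = stepFn G i t N M (r k) := by
    intro k
    rw [hr]
    exact Function.iterate_succ_apply' _ k _
  set Inv : ℕ → Prop := fun k =>
    IsCTNode G i t (r k) ∧ (r k).length = k + 2 ∧ ((r k ∈ N) ↔ (cN ↔ Even k)) ∧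
    (∀ j (x y : V), (r k)[j]? = some x → (r k)[j+1]? = some y →
      (s(x, y) ∈ M ↔ (cN ↔ Odd j))) with hInv
  have hInv0 : Inv 0 := by
    rw [hInv]
    refine ⟨by rw [hr0]; exact hvCT, by rw [hr0]; rfl, ?_, ?_⟩
    · rw [hr0]
      have he : Even 0 := Even.zero
      constructor
      · intro h; exact iff_of_true (hvN.mp h) he
      · intro h; exact hvN.mpr (h.mpr he)
    · intro j x y hx hy
      rw [hr0] at hx hy
      match j with
      | 0 =>
        simp only [List.getElem?_cons_zero, List.getElem?_cons_succ, Option.some_inj] at hx hy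
        subst hx; subst hy
        have ho : ¬ Odd 0 := by simp
        rw [hvM]
        constructor
        · intro h
          constructor
          · intro hc; exact absurd hc h
          · intro hodd; exact absurd hodd ho
        · intro h hc
          exact ho (h.mp hc)
      | j + 1 =>
        rw [List.getElem?_eq_some_iff] at hy
        obtain ⟨hlt, _⟩ := hy
        simp only [List.length_cons, List.length_nil] at hlt
        omega
  have hInvStep : ∀ k, k + 1 ≤ t - 1 → Inv k → Inv (k + 1) := by
    intro k hk hInvk
    rw [hInv] at hInvk
    obtain ⟨hCT, hLen, hMem, hEdge⟩ := hInvk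
    have hlenk : (r k).length ≤ t := by omega
    have hklt : k + 1 < (r k).length := by omega
    have hklt0 : k < (r k).length := by omega
    set u : V := (r k)[k] with hudef
    set v' : V := (r k)[k+1] with hv'def
    have hu : (r k)[(r k).length - 2]? = some u := by
      have : (r k).length - 2 = k := by omega
      rw [this]
      exact List.getElem?_eq_getElem hklt0
    have hv : (r k)[(r k).length - 1]? = some v' := by
      have : (r k).length - 1 = k + 1 := by omega
      rw [this]
      exact List.getElem?_eq_getElem hklt
    have heuv : s(u, v') ∈ M ↔ (cN ↔ Odd k) :=
      hEdge k u v' (List.getElem?_eq_getElem hklt0) (List.getElem?_eq_getElem hklt)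
    have hdiff : (r k ∈ N) ↔ s(u, v') ∉ M := by
      rw [hMem, heuv, ← Nat.not_even_iff_odd]
      tauto
    have hex : ∃ x, Qprop G i t N M (r k) x :=
      ext_step G b M hM i t N hN (r k) hCT hlenk (by omega) u v' hu hv hdiff
    have hrk1 : r (k + 1) = r k ++ [hex.choose] := by
      rw [hrsucc k]
      unfold stepFn
      rw [dif_pos hex]
    obtain ⟨hQ1, hQ2, hQ3⟩ := hex.choose_spec
    rw [hInv]
    refine ⟨by rw [hrk1]; exact hQ1, by rw [hrk1]; simp [hLen], ?_, ?_⟩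
    · rw [hrk1, hQ2, hMem, Nat.even_add_one]
      tauto
    · intro j x y hx hy
      rw [hrk1] at hx hy
      have hylt : j + 1 < (r k).length + 1 := by
        have h' := (List.getElem?_eq_some_iff.mp hy).1
        simpa using h'
      by_cases hcase : j + 1 < (r k).length
      · exact hEdge j x y (by rwa [List.getElem?_append_left (by omega)] at hx)
          (by rwa [List.getElem?_append_left hcase] at hy)
      · have hj : j = k + 1 := by omega
        have hxv' : x = v' := by
          have hx' : (r k)[j]? = some x := by
            rwa [List.getElem?_append_left (by omega)] at hx
          rw [hj] at hx'
          rw [List.getElem?_eq_getElem hklt] at hx'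
          exact (Option.some_inj.mp hx').symm
        have hyc : y = hex.choose := by
          have h3 := List.getElem?_concat_length (l := r k) (a := hex.choose)
          have hl1 : j + 1 = (r k).length := by omega
          rw [hl1, h3] at hy
          exact (Option.some_inj.mp hy).symm
        subst hxv'; subst hyc
        rw [hQ3 v' hv, hMem, hj, Nat.odd_add_one, Nat.not_odd_iff_even]
  have hInvAll : ∀ k, k ≤ t - 1 → Inv k := by
    intro k
    induction k with
    | zero => intro _; exact hInv0
    | succ k ih => intro hk; exact hInvStep k hk (ih (by omega))
  obtain ⟨hCT, hLen, _, hEdge⟩ := by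
    have h := hInvAll (t - 1) (le_refl _)
    rwa [hInv] at h
  set L : List V := r (t - 1) with hL
  have hLlen : L.length = t + 1 := by rw [hL, hLen]; omega
  refine ⟨fun j => (L[j]?).getD v, ?_, ?_, ?_⟩
  · have h0 : L[0]? = some i := by
      rw [← List.head?_eq_getElem?]
      exact hCT.2.1
    simp only [h0]; rfl
  · intro j hj
    have h1 : L[j]? = some (L[j]'(by omega)) := List.getElem?_eq_getElem (by omega)
    have h2 : L[j+1]? = some (L[j+1]'(by omega)) := List.getElem?_eq_getElem (by omega)
    simp only [h1, h2, Option.getD_some]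
    exact chain'_getElem? hCT.1 h1 h2
  · intro j hj
    have h1 : L[j]? = some (L[j]'(by omega)) := List.getElem?_eq_getElem (by omega)
    have h2 : L[j+1]? = some (L[j+1]'(by omega)) := List.getElem?_eq_getElem (by omega)
    simp only [h1, h2, Option.getD_some]
    exact hEdge j _ _ h1 h2

lemma get_root_pair [Fintype V] [DecidableEq V] (G : SimpleGraph V) [DecidableRel G.Adj]
    (b : V → ℕ) (M : Finset (Sym2 V)) (hM : IsPerfectBMatching G b M)
    (i : V) (t : ℕ) (N : Finset (List V)) (hN : IsTreeBMatching G b i t N)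
    (ht2 : 2 ≤ t) (v : V) (hcon : ¬ ([i, v] ∈ N ↔ (G.Adj i v ∧ s(i, v) ∈ M))) :
    ∃ cA cB, [i, cA] ∈ N ∧ s(i, cA) ∉ M ∧ [i, cB] ∉ N ∧ s(i, cB) ∈ M := by
  classical
  have hctsingle : IsCTNode G i t [i] := ct_single G i t
  have hrootcount := hN.2 [i] i hctsingle (by simp; omega) rfl
  have hnotiN : [i] ∉ N := by
    intro h
    have h2 := (hN.1 _ h).2
    simp at h2
  rw [if_neg hnotiN, zero_add] at hrootcount
  have hrootN : (Finset.univ.filter (fun x => [i, x] ∈ N)).card = b i := by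
    simpa using hrootcount
  have hrootM : (Finset.univ.filter (fun x => s(i, x) ∈ M)).card = b i := by
    rw [card_sym_filter G M hM.1 i]; exact hM.2 i
  set A := Finset.univ.filter (fun x => [i, x] ∈ N) with hA
  set B := Finset.univ.filter (fun x => s(i, x) ∈ M) with hB
  by_cases h1 : [i, v] ∈ N
  · have hadj : G.Adj i v := List.isChain_pair.mp (hN.1 _ h1).1.1
    have h2 : s(i, v) ∉ M := fun h2 => hcon (iff_of_true h1 ⟨hadj, h2⟩)
    have hnsub : ¬ (B ⊆ A) := by
      intro hsub
      have hBA : B = A := Finset.eq_of_subset_of_card_le hsub (by omega)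
      have : v ∈ A := by rw [hA, Finset.mem_filter]; exact ⟨Finset.mem_univ v, h1⟩
      rw [← hBA, hB, Finset.mem_filter] at this
      exact h2 this.2
    obtain ⟨x, hxB, hxA⟩ := Finset.not_subset.mp hnsub
    rw [hB, Finset.mem_filter] at hxB
    rw [hA, Finset.mem_filter, not_and] at hxA
    exact ⟨v, x, h1, h2, hxA (Finset.mem_univ x), hxB.2⟩
  · have h2 : G.Adj i v ∧ s(i, v) ∈ M := by
      by_contra h2
      exact hcon (iff_of_false h1 h2)
    have hnsub : ¬ (A ⊆ B) := by
      intro hsub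
      have hAB : A = B := Finset.eq_of_subset_of_card_le hsub (by omega)
      have : v ∈ B := by rw [hB, Finset.mem_filter]; exact ⟨Finset.mem_univ v, h2.2⟩
      rw [← hAB, hA, Finset.mem_filter] at this
      exact h1 this.2
    obtain ⟨x, hxA, hxB⟩ := Finset.not_subset.mp hnsub
    rw [hA, Finset.mem_filter] at hxA
    rw [hB, Finset.mem_filter, not_and] at hxB
    exact ⟨x, v, hxA.2, hxB (Finset.mem_univ x), h1, h2.2⟩

end AuxLemmas

/-- if the LP relaxation has no fractional optimal solution (unique optimal
solution, the incidence vector of `M*`) and the optimal dual `y*` satisfies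
`w_{ij} = y*_i + y*_j` on every edge (so no gap `ε` exists), then for every vertex `i` and
every level `t > n`, the edges at the root of any minimum weight perfect tree-b-matching
of the computation tree `T_i^t` are exactly the `M*`-edges at `i`: BP is correct after `n`
iterations. -/
theorem stmt12 [Fintype V] [DecidableEq V] (G : SimpleGraph V) [DecidableRel G.Adj]
    (w : Sym2 V → ℝ) (b : V → ℕ) (M : Finset (Sym2 V)) (y : V → ℝ) (lam : Sym2 V → ℝ)
    (hb : ∀ v, b v < G.degree v)
    (hM : IsPerfectBMatching G b M)
    (hopt : ∀ x', LPFeasible G b x' → LPCost G w (indic M) ≤ LPCost G w x')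
    (hnofrac : ∀ x', LPFeasible G b x' →
      LPCost G w x' = LPCost G w (indic M) → x' = indic M)
    (hd : DualFeasible G w y lam)
    (hdopt : ∀ y' lam', DualFeasible G w y' lam' → DualObj G b y' lam' ≤ DualObj G b y lam)
    (heq : ∀ i j, G.Adj i j → w s(i, j) = y i + y j)
    (i : V) (t : ℕ) (ht : Fintype.card V < t)
    (N : Finset (List V))
    (hN : IsTreeBMatching G b i t N)
    (hNopt : ∀ N', IsTreeBMatching G b i t N' → treeWeight w N ≤ treeWeight w N') :
    ∀ v : V, [i, v] ∈ N ↔ (G.Adj i v ∧ s(i, v) ∈ M) := by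
  classical
  intro v
  have hVpos : 1 ≤ Fintype.card V := Fintype.card_pos_iff.mpr ⟨i⟩
  have ht2 : 2 ≤ t := by omega
  by_contra hcon
  obtain ⟨cA, cB, hcAN, hcAM, hcBN, hcBM⟩ := get_root_pair G b M hM i t N hN ht2 v hcon
  have hcACT : IsCTNode G i t [i, cA] := (hN.1 _ hcAN).1
  have hcBadj : G.Adj i cB := (G.mem_edgeSet).mp (SimpleGraph.mem_edgeFinset.mp (hM.1 hcBM))
  have hcBCT : IsCTNode G i t [i, cB] := ct_pair G i cB t hcBadj (by omega)
  obtain ⟨q₁, hq₁0, hq₁adj, hq₁M⟩ := branch_lemma G b M hM i t N hN ht2 cA hcACT True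
    (iff_of_true hcAN trivial) (iff_of_false hcAM (fun h => h trivial))
  obtain ⟨q₂, hq₂0, hq₂adj, hq₂M⟩ := branch_lemma G b M hM i t N hN ht2 cB hcBCT False
    (iff_of_false hcBN id) (iff_of_true hcBM not_false)
  set p : ℕ → V := fun s => if s ≤ t then q₁ (t - s) else q₂ (s - t) with hp
  have hpq1 : ∀ s, s ≤ t → p s = q₁ (t - s) := fun s hs => if_pos hs
  have hpq2 : ∀ s, t < s → p s = q₂ (s - t) := fun s hs => if_neg (by omega)
  have hpt : p t = i := by rw [hpq1 t le_rfl, Nat.sub_self, hq₁0]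
  have hadj : ∀ s, s < 2 * t → G.Adj (p s) (p (s + 1)) := by
    intro s hs
    by_cases h1 : s + 1 ≤ t
    · rw [hpq1 s (by omega), hpq1 (s+1) h1]
      have hj : t - s = (t - (s + 1)) + 1 := by omega
      rw [hj]
      exact (hq₁adj (t - (s+1)) (by omega)).symm
    · by_cases h2 : s = t
      · rw [h2, hpt, hpq2 (t+1) (by omega), ← hq₂0]
        have h3 : t + 1 - t = 0 + 1 := by omega
        rw [h3]
        exact hq₂adj 0 (by omega)
      · rw [hpq2 s (by omega), hpq2 (s+1) (by omega)]
        have h3 : s + 1 - t = (s - t) + 1 := by omega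
        rw [h3]
        exact hq₂adj (s - t) (by omega)
  have hm : ∀ s, s < 2 * t → (s(p s, p (s + 1)) ∈ M ↔ (s + t) % 2 = 0) := by
    intro s hs
    by_cases h1 : s + 1 ≤ t
    · rw [hpq1 s (by omega), hpq1 (s+1) h1]
      have hj : t - s = (t - (s + 1)) + 1 := by omega
      rw [hj, Sym2.eq_swap, hq₁M (t - (s+1)) (by omega)]
      simp only [true_iff, Nat.odd_iff]
      omega
    · by_cases h2 : s = t
      · rw [h2, hpt, hpq2 (t+1) (by omega), ← hq₂0]
        have h3 : t + 1 - t = 0 + 1 := by omega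
        rw [h3, hq₂M 0 (by omega)]
        simp only [false_iff, Nat.odd_iff]
        omega
      · rw [hpq2 s (by omega), hpq2 (s+1) (by omega)]
        have h3 : s + 1 - t = (s - t) + 1 := by omega
        rw [h3, hq₂M (s - t) (by omega)]
        simp only [false_iff, Nat.odd_iff]
        omega
  exact no_long_alt_walk G w b M y hM hnofrac heq t ht p hadj hm
end

section
/- Suppose the LP relaxation of the (non-perfect) minimum weight b-matching problem has no fractional optimal solution, with unique optimal b-matching H* and optimal dual y* satisfying the complementary slackness conditions (including y*_i = 0 for every vertex i unsaturated by H*). Then for every alternating walk P with respect to H* whose both endpoints are H*-unsaturated vertices and whose first and last edges are not in H*, there exists an edge {i,j} ∈ P with |w_ij + y*_i + y*_j| > 0. -/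
set_option autoImplicit false

open Finset

variable {V : Type*}

/-- `H` is a (possibly non-perfect) b-matching of `G`: a set of edges of `G` in which
every vertex `i` has degree at most `b i`. -/
def IsBMatching [Fintype V] [DecidableEq V] (G : SimpleGraph V) [DecidableRel G.Adj]
    (b : V → ℕ) (H : Finset (Sym2 V)) : Prop :=
  H ⊆ G.edgeFinset ∧ ∀ i, degIn H i ≤ b i

/-- Feasibility for the LP relaxation of the (non-perfect) minimum weight b-matching
problem: `0 ≤ x_e ≤ 1` on edges, `x` vanishes off the edges, and
`∑_{j ∈ N(i)} x_{ij} ≤ b i` at every vertex. -/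
def LPFeasibleNP [Fintype V] [DecidableEq V] (G : SimpleGraph V) [DecidableRel G.Adj]
    (b : V → ℕ) (x : Sym2 V → ℝ) : Prop :=
  (∀ e, e ∉ G.edgeFinset → x e = 0) ∧
  (∀ e ∈ G.edgeFinset, 0 ≤ x e ∧ x e ≤ 1) ∧
  (∀ i, ∑ e ∈ G.edgeFinset.filter (fun e => i ∈ e), x e ≤ (b i : ℝ))

/-- suppose the LP relaxation of the (non-perfect) minimum weight
b-matching problem has no fractional optimal solution, with unique optimal b-matching
`H*` and optimal dual `(y*, λ*)` satisfying the complementary slackness conditions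
(including `y*_i = 0` at every `H*`-unsaturated vertex).  Then every alternating walk
whose endpoints are `H*`-unsaturated and whose first and last edges are not in `H*`
contains an edge with `|w_{ij} + y*_i + y*_j| > 0`. -/
theorem stmt14 [Fintype V] [DecidableEq V] (G : SimpleGraph V) [DecidableRel G.Adj]
    (w : Sym2 V → ℝ) (b : V → ℕ) (H : Finset (Sym2 V)) (y : V → ℝ) (lam : Sym2 V → ℝ)
    (hw : ∀ e ∈ G.edgeFinset, w e ≤ 0)
    (hH : IsBMatching G b H)
    (hopt : ∀ x', LPFeasibleNP G b x' → LPCost G w (indic H) ≤ LPCost G w x')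
    (hnofrac : ∀ x', LPFeasibleNP G b x' →
      LPCost G w x' = LPCost G w (indic H) → x' = indic H)
    -- dual feasibility
    (hdf : ∀ i j, G.Adj i j → -(y i) - y j ≤ w s(i, j) + lam s(i, j))
    (hlam : ∀ e ∈ G.edgeFinset, 0 ≤ lam e)
    (hy : ∀ i, 0 ≤ y i)
    -- complementary slackness
    (csH : ∀ i j, G.Adj i j → s(i, j) ∈ H → w s(i, j) + lam s(i, j) + y i + y j = 0)
    (csL : ∀ i j, G.Adj i j → s(i, j) ∉ H → lam s(i, j) = 0)
    (csU : ∀ i, degIn H i < b i → y i = 0)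
    -- an alternating walk with unsaturated endpoints whose end edges avoid `H*`
    (k : ℕ) (p : ℕ → V) (hk : 1 ≤ k)
    (hwalk : IsAltWalk G H k p)
    (hu0 : degIn H (p 0) < b (p 0)) (huk : degIn H (p k) < b (p k))
    (hfirst : s(p 0, p 1) ∉ H) (hlast : s(p (k - 1), p k) ∉ H) :
    ∃ t, t < k ∧ |w s(p t, p (t + 1)) + y (p t) + y (p (t + 1))| > 0 := by
  by_contra hcon
  push_neg at hcon
  have htight : ∀ t, t < k → w s(p t, p (t + 1)) + y (p t) + y (p (t + 1)) = 0 := by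
    intro t ht
    exact abs_eq_zero.mp (le_antisymm (hcon t ht) (abs_nonneg _))
  obtain ⟨hadj, halt, -⟩ := hwalk
  have hedge : ∀ t, t < k → s(p t, p (t + 1)) ∈ G.edgeFinset := by
    intro t ht
    simpa [SimpleGraph.mem_edgeFinset] using (hadj t ht)
  -- parity of walk edges
  have hpar : ∀ t, t < k → (s(p t, p (t + 1)) ∈ H ↔ Odd t) := by
    intro t
    induction t with
    | zero => intro _; simp [hfirst]
    | succ n ih =>
      intro h
      have hn : n < k := Nat.lt_of_succ_lt h
      have h2 := halt n h
      have h3 : Odd (n + 1) ↔ ¬ Odd n := by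
        rw [Nat.odd_iff, Nat.odd_iff]; omega
      rw [h3, ← ih hn]
      tauto
  have hkodd : Odd k := by
    have hk1 : k - 1 < k := by omega
    have hk2 : k - 1 + 1 = k := by omega
    have h4 := hpar (k - 1) hk1
    rw [hk2] at h4
    have h5 : ¬ Odd (k - 1) := fun h => hlast (h4.mpr h)
    rw [Nat.odd_iff] at h5 ⊢
    omega
  -- the perturbation parameter
  have hk0 : (1:ℝ) ≤ (k:ℝ) := by exact_mod_cast hk
  set ε : ℝ := 1 / (2 * k) with hεdef
  have hε : 0 < ε := by
    rw [hεdef]; apply div_pos one_pos; linarith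
  have hεk : ε * (k:ℝ) = 1/2 := by
    rw [hεdef]; field_simp
  have h2ε : 2 * ε ≤ 1 := by
    nlinarith
  -- the signed multiplicity function of the walk
  set χ : Sym2 V → ℝ :=
    fun e => ∑ t ∈ Finset.range k, (if s(p t, p (t + 1)) = e then (-1:ℝ)^t else 0) with hχdef
  -- generic weighted sum of χ over an edge subset
  have hsum : ∀ (S : Finset (Sym2 V)) (g : Sym2 V → ℝ),
      ∑ e ∈ S, g e * χ e
        = ∑ t ∈ Finset.range k,
            (if s(p t, p (t + 1)) ∈ S then g s(p t, p (t + 1)) * (-1:ℝ)^t else 0) := by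
    intro S g
    simp only [hχdef, Finset.mul_sum, mul_ite, mul_zero]
    rw [Finset.sum_comm]
    exact Finset.sum_congr rfl fun t _ => Finset.sum_ite_eq S _ (fun e => g e * (-1:ℝ)^t)
  -- the sign of each term
  have hterm : ∀ e, ∀ t ∈ Finset.range k,
      (if s(p t, p (t + 1)) = e then ((-1:ℝ))^t else 0)
        = (if s(p t, p (t + 1)) = e then (if e ∈ H then (-1:ℝ) else 1) else 0) := by
    intro e t ht
    rw [Finset.mem_range] at ht
    by_cases he : s(p t, p (t + 1)) = e
    · subst he
      by_cases hm : s(p t, p (t + 1)) ∈ H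
      · simp [hm, ((hpar t ht).mp hm).neg_one_pow]
      · have hev : Even t := Nat.not_odd_iff_even.mp (fun h => hm ((hpar t ht).mpr h))
        simp [hm, hev.neg_one_pow]
    · simp [he]
  -- χ vanishes off edges
  have hχ0 : ∀ e, e ∉ G.edgeFinset → χ e = 0 := by
    intro e he
    apply Finset.sum_eq_zero
    intro t ht
    rw [Finset.mem_range] at ht
    rw [if_neg]
    rintro rfl
    exact he (hedge t ht)
  -- bounds on χ
  have hχH : ∀ e ∈ H, -(k:ℝ) ≤ χ e ∧ χ e ≤ 0 := by
    intro e hm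
    have hr : χ e = ∑ t ∈ Finset.range k,
        (if s(p t, p (t + 1)) = e then (-1:ℝ) else 0) := by
      rw [hχdef]
      refine Finset.sum_congr rfl fun t ht => ?_
      rw [hterm e t ht, if_pos hm]
    constructor
    · rw [hr]
      calc -(k:ℝ) = ∑ _t ∈ Finset.range k, (-1:ℝ) := by
            simp [Finset.sum_const, Finset.card_range]
        _ ≤ _ := Finset.sum_le_sum fun t _ => by split <;> norm_num
    · rw [hr]
      apply Finset.sum_nonpos
      intro t _
      split <;> norm_num
  have hχnH : ∀ e, e ∉ H → 0 ≤ χ e ∧ χ e ≤ (k:ℝ) := by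
    intro e hm
    have hr : χ e = ∑ t ∈ Finset.range k,
        (if s(p t, p (t + 1)) = e then (1:ℝ) else 0) := by
      rw [hχdef]
      refine Finset.sum_congr rfl fun t ht => ?_
      rw [hterm e t ht, if_neg hm]
    constructor
    · rw [hr]
      apply Finset.sum_nonneg
      intro t _
      split <;> norm_num
    · rw [hr]
      calc ∑ t ∈ Finset.range k, (if s(p t, p (t + 1)) = e then (1:ℝ) else 0)
          ≤ ∑ _t ∈ Finset.range k, (1:ℝ) :=
            Finset.sum_le_sum fun t _ => by split <;> norm_num
        _ = (k:ℝ) := by simp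
  -- column sums of χ telescope
  have hchisum : ∀ i : V,
      ∑ e ∈ G.edgeFinset.filter (fun e => i ∈ e), χ e
        = (if i = p 0 then (1:ℝ) else 0) + (if i = p k then 1 else 0) := by
    intro i
    have h1 : ∑ e ∈ G.edgeFinset.filter (fun e => i ∈ e), χ e
        = ∑ e ∈ G.edgeFinset.filter (fun e => i ∈ e), (1:ℝ) * χ e := by
      simp
    rw [h1, hsum]
    have h2 : ∀ t ∈ Finset.range k,
        (if s(p t, p (t + 1)) ∈ G.edgeFinset.filter (fun e => i ∈ e)
          then (1:ℝ) * (-1:ℝ)^t else 0)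
          = (fun t => (-1:ℝ)^t * (if i = p t then 1 else 0)) t
            - (fun t => (-1:ℝ)^t * (if i = p t then 1 else 0)) (t + 1) := by
      intro t ht
      rw [Finset.mem_range] at ht
      have hne : p t ≠ p (t + 1) := (hadj t ht).ne
      have hmem : s(p t, p (t + 1)) ∈ G.edgeFinset.filter (fun e => i ∈ e)
          ↔ (i = p t ∨ i = p (t + 1)) := by
        simp [Finset.mem_filter, hedge t ht, Sym2.mem_iff]
      beta_reduce
      by_cases h0 : i = p t <;> by_cases h1 : i = p (t + 1)
      · exact absurd (h0.symm.trans h1) hne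
      · rw [if_pos (hmem.mpr (Or.inl h0)), if_pos h0, if_neg h1]; ring
      · rw [if_pos (hmem.mpr (Or.inr h1)), if_neg h0, if_pos h1]; ring
      · rw [if_neg (fun h => (hmem.mp h).elim h0 h1), if_neg h0, if_neg h1]; ring
    rw [Finset.sum_congr rfl h2, Finset.sum_range_sub']
    simp only [pow_zero, one_mul, hkodd.neg_one_pow]
    ring
  -- total weighted χ-sum vanishes
  have hwsum : ∑ e ∈ G.edgeFinset, w e * χ e = 0 := by
    rw [hsum]
    have h2 : ∀ t ∈ Finset.range k,
        (if s(p t, p (t + 1)) ∈ G.edgeFinset then w s(p t, p (t + 1)) * (-1:ℝ)^t else 0)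
          = (fun t => (-1:ℝ)^(t + 1) * y (p t)) t
            - (fun t => (-1:ℝ)^(t + 1) * y (p t)) (t + 1) := by
      intro t ht
      rw [Finset.mem_range] at ht
      have hw0 : w s(p t, p (t + 1)) = -(y (p t)) - y (p (t + 1)) := by
        have := htight t ht; linarith
      rw [if_pos (hedge t ht), hw0]
      simp only [pow_succ]
      ring
    rw [Finset.sum_congr rfl h2, Finset.sum_range_sub']
    have h0 : y (p 0) = 0 := csU _ hu0
    have hkk : y (p k) = 0 := csU _ huk
    simp [h0, hkk]
  set e0 : Sym2 V := s(p 0, p 1) with he0def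
  have hχe0 : 1 ≤ χ e0 := by
    have hr : χ e0 = ∑ t ∈ Finset.range k,
        (if s(p t, p (t + 1)) = e0 then (1:ℝ) else 0) := by
      rw [hχdef]
      refine Finset.sum_congr rfl fun t ht => ?_
      rw [hterm e0 t ht, if_neg hfirst]
    rw [hr]
    have h0 : (0:ℕ) ∈ Finset.range k := Finset.mem_range.mpr hk
    have hsl := Finset.single_le_sum
      (f := fun t => if s(p t, p (t + 1)) = e0 then (1:ℝ) else 0)
      (fun t _ => by split <;> norm_num) h0
    have he : s(p 0, p (0 + 1)) = e0 := by rw [he0def]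
    simp only [he, if_pos] at hsl
    simpa using hsl
  -- the perturbed solution
  set x' : Sym2 V → ℝ := fun e => indic H e + ε * χ e with hx'def
  have hfeas : LPFeasibleNP G b x' := by
    refine ⟨?_, ?_, ?_⟩
    · intro e he
      have h1 : indic H e = 0 := if_neg (fun hm => he (hH.1 hm))
      simp [hx'def, h1, hχ0 e he]
    · intro e _
      by_cases hm : e ∈ H
      · have h1 : indic H e = 1 := if_pos hm
        obtain ⟨hl, hr⟩ := hχH e hm
        constructor
        · show 0 ≤ indic H e + ε * χ e
          rw [h1]
          nlinarith [hε.le]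
        · show indic H e + ε * χ e ≤ 1
          rw [h1]
          nlinarith [hε.le]
      · have h1 : indic H e = 0 := if_neg hm
        obtain ⟨hl, hr⟩ := hχnH e hm
        constructor
        · show 0 ≤ indic H e + ε * χ e
          rw [h1]
          nlinarith [hε.le]
        · show indic H e + ε * χ e ≤ 1
          rw [h1]
          nlinarith [hε.le]
    · intro i
      have hsplit : ∑ e ∈ G.edgeFinset.filter (fun e => i ∈ e), x' e
          = (∑ e ∈ G.edgeFinset.filter (fun e => i ∈ e), indic H e)
            + ε * ∑ e ∈ G.edgeFinset.filter (fun e => i ∈ e), χ e := by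
        rw [Finset.mul_sum, ← Finset.sum_add_distrib]
      rw [hsplit, hchisum i]
      have hSH : (G.edgeFinset.filter (fun e => i ∈ e)) ∩ H = H.filter (fun e => i ∈ e) := by
        ext e
        simp only [Finset.mem_inter, Finset.mem_filter]
        exact ⟨fun ⟨⟨_, h2⟩, h3⟩ => ⟨h3, h2⟩, fun ⟨h1, h2⟩ => ⟨⟨hH.1 h1, h2⟩, h1⟩⟩
      have hdeg : ∑ e ∈ G.edgeFinset.filter (fun e => i ∈ e), indic H e = (degIn H i : ℝ) := by
        simp only [indic]
        rw [Finset.sum_ite_mem, hSH]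
        simp [degIn]
      rw [hdeg]
      have hcases : (i ≠ p 0 ∧ i ≠ p k) ∨ degIn H i < b i := by
        by_cases h0 : i = p 0
        · exact Or.inr (h0 ▸ hu0)
        · by_cases h1 : i = p k
          · exact Or.inr (h1 ▸ huk)
          · exact Or.inl ⟨h0, h1⟩
      rcases hcases with ⟨h0, h1⟩ | hlt
      · rw [if_neg h0, if_neg h1]
        have := hH.2 i
        have hble : (degIn H i : ℝ) ≤ (b i : ℝ) := by exact_mod_cast this
        linarith
      · have hble : (degIn H i : ℝ) + 1 ≤ (b i : ℝ) := by exact_mod_cast hlt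
        have hc0 : (0:ℝ) ≤ (if i = p 0 then (1:ℝ) else 0) + (if i = p k then 1 else 0) := by
          split <;> split <;> norm_num
        have hc2 : (if i = p 0 then (1:ℝ) else 0) + (if i = p k then 1 else 0) ≤ 2 := by
          split <;> split <;> norm_num
        nlinarith [hε.le]
  have hcost : LPCost G w x' = LPCost G w (indic H) := by
    simp only [LPCost]
    have h1 : ∑ e ∈ G.edgeFinset, w e * x' e
        = ∑ e ∈ G.edgeFinset, w e * indic H e + ε * ∑ e ∈ G.edgeFinset, w e * χ e := by
      rw [Finset.mul_sum, ← Finset.sum_add_distrib]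
      refine Finset.sum_congr rfl fun e _ => ?_
      show w e * (indic H e + ε * χ e) = _
      ring
    rw [h1, hwsum]
    ring
  have hx'eq := hnofrac x' hfeas hcost
  have heval := congrFun hx'eq e0
  have hind : indic H e0 = 0 := if_neg hfirst
  have heval2 : indic H e0 + ε * χ e0 = indic H e0 := heval
  rw [hind] at heval2
  nlinarith
end

section
/- Let P be an alternating walk (with respect to a b-matching H*) that intersects itself at most once, so that the subgraph of P decomposes as C ∪ P_1 where C is an odd simple alternating cycle and P_1 is a simple alternating path (one possibly empty), with endpoints of P_1 unsaturated by H* and adjacent edges of those endpoints not in H*. Then the vector x' defined by x' = 1 − x* on P_1, x' = 1/2 on C, and x' = x* elsewhere is a feasible solution of the non-perfect b-matching LP relaxation. -/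
set_option autoImplicit false
set_option maxHeartbeats 1000000

open Finset

variable {V : Type*}

/-- let `P` be an alternating walk with respect to the b-matching `H*`
that intersects itself at most once, decomposing as a simple alternating path
`P₁ = p[0..a]` followed by an odd simple alternating cycle `C = p[a..d]` (one of the two
pieces possibly empty), with both endpoints of `P₁` unsaturated by `H*` and the edges of
`P₁` adjacent to those endpoints not in `H*`.  Then the vector `x'` equal to `1 − x*` on
`P₁`, to `1/2` on `C`, and to `x*` elsewhere is a feasible solution of the non-perfect
b-matching LP relaxation. -/
theorem stmt15 [Fintype V] [DecidableEq V] (G : SimpleGraph V) [DecidableRel G.Adj]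
    (b : V → ℕ) (H : Finset (Sym2 V))
    (hH : IsBMatching G b H)
    (p : ℕ → V) (d a : ℕ) (had : a ≤ d) (hd : 0 < d)
    (hwalk : IsAltWalk G H d p)
    -- `C = p[a..d]` is a cycle of odd length (or is empty)
    (hC : a < d → p a = p d)
    (hCodd : Odd (d - a) ∨ a = d)
    -- the walk intersects itself at most once
    (hinj : ∀ u v, u < v → v ≤ d → p u = p v → u = a ∧ v = d)
    -- endpoints of `P₁` are unsaturated, and their adjacent walk edges avoid `H*`
    (hu0 : degIn H (p 0) < b (p 0)) (hua : degIn H (p a) < b (p a))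
    (hend0 : 0 < a → s(p 0, p 1) ∉ H)
    (henda : 0 < a → s(p (a - 1), p a) ∉ H) :
    LPFeasibleNP G b (fun e =>
      if e ∈ (Finset.Ico a d).image (fun k => s(p k, p (k + 1))) then 1 / 2
      else if e ∈ (Finset.range a).image (fun k => s(p k, p (k + 1))) then 1 - indic H e
      else indic H e) := by
  
  classical
  obtain ⟨hadj, halt, hnb⟩ := hwalk
  obtain ⟨hHsub, hHdeg⟩ := hH
  set e : ℕ → Sym2 V := fun k => s(p k, p (k + 1)) with he
  set x' : Sym2 V → ℝ := fun e' =>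
      if e' ∈ (Finset.Ico a d).image e then 1 / 2
      else if e' ∈ (Finset.range a).image e then 1 - indic H e'
      else indic H e' with hx'
  have hindic0 : ∀ {e' : Sym2 V}, e' ∉ H → indic H e' = 0 := fun h => by simp [indic, h]
  have hindic1 : ∀ {e' : Sym2 V}, e' ∈ H → indic H e' = 1 := fun h => by simp [indic, h]
  have hedge : ∀ k, k < d → e k ∈ G.edgeFinset := by
    intro k hk
    simpa [he, SimpleGraph.mem_edgeFinset] using hadj k hk
  have halt' : ∀ t, t + 1 < d → (e t ∈ H ↔ e (t + 1) ∉ H) := by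
    intro t ht
    have h2 : t + 1 + 1 = t + 2 := rfl
    simpa [he, h2] using halt t ht
  have hpij : ∀ u v, u ≤ d → v ≤ d → p u = p v →
      u = v ∨ (u = a ∧ v = d) ∨ (u = d ∧ v = a) := by
    intro u v hu hv huv
    rcases lt_trichotomy u v with h | h | h
    · exact Or.inr (Or.inl ⟨(hinj u v h hv huv).1, (hinj u v h hv huv).2⟩)
    · exact Or.inl h
    · exact Or.inr (Or.inr ⟨(hinj v u h hu huv.symm).2, (hinj v u h hu huv.symm).1⟩)
  have han3 : a < d → a + 3 ≤ d := by
    intro hlt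
    rcases hCodd with ⟨m, hm⟩ | heq
    · have h1 : d ≠ a + 1 := by
        intro h
        exact (hadj a hlt).ne (by rw [hC hlt, h])
      omega
    · omega
  have heinj : ∀ k j, k < d → j < d → e k = e j → k = j := by
    have main : ∀ k j, k ≤ j → k < d → j < d → e k = e j → k = j := by
      intro k j hkj hk hj heq
      simp only [he, Sym2.eq_iff] at heq
      rcases heq with ⟨h1, _⟩ | ⟨h1, h2⟩
      · rcases hpij k j (by omega) (by omega) h1 with h | ⟨_, h⟩ | ⟨h, _⟩ <;> omega
      · rcases hpij (k + 1) j (by omega) (by omega) h2 with h | ⟨h3, h4⟩ | ⟨h3, h4⟩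
        · exact absurd (by rw [h1]; congr 1; omega) (hnb k (by omega))
        · omega
        · have := han3 (by omega)
          omega
    intro k j hk hj heq
    rcases le_total k j with h | h
    · exact main k j h hk hj heq
    · exact (main j k h hj hk heq.symm).symm
  have hpar : ∀ m, a + m < d → (e (a + m) ∈ H ↔ (Even m ↔ e a ∈ H)) := by
    intro m
    induction m with
    | zero => intro _; simp
    | succ n ih =>
      intro h
      have h1 := halt' (a + n) (by omega)
      have h2 := ih (by omega)
      have h3 : a + (n + 1) = a + n + 1 := by omega
      rw [h3, Nat.even_add_one]
      rw [iff_not_comm.mp h1, h2]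
      exact not_iff
  refine ⟨?_, ?_, ?_⟩
  · -- vanishing off edges
    intro e' he'
    have h1 : e' ∉ (Finset.Ico a d).image e := by
      intro hmem
      obtain ⟨k, hk, hke⟩ := Finset.mem_image.mp hmem
      exact he' (hke ▸ hedge k (Finset.mem_Ico.mp hk).2)
    have h2 : e' ∉ (Finset.range a).image e := by
      intro hmem
      obtain ⟨k, hk, hke⟩ := Finset.mem_image.mp hmem
      exact he' (hke ▸ hedge k (by have := Finset.mem_range.mp hk; omega))
    have h3 : e' ∉ H := fun h => he' (hHsub h)
    show x' e' = 0
    simp only [hx']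
    rw [if_neg h1, if_neg h2]
    exact hindic0 h3
  · -- bounds
    intro e' _
    have hb1 : (0:ℝ) ≤ indic H e' := by unfold indic; split_ifs <;> norm_num
    have hb2 : indic H e' ≤ 1 := by unfold indic; split_ifs <;> norm_num
    show 0 ≤ x' e' ∧ x' e' ≤ 1
    simp only [hx']
    split_ifs <;> constructor <;> linarith
  · -- degree constraints
    intro i
    set S := G.edgeFinset.filter (fun e' => i ∈ e') with hS
    set K := (Finset.range d).filter (fun k => i ∈ e k) with hKdef
    have hKmem : ∀ k, k ∈ K ↔ k < d ∧ (i = p k ∨ i = p (k + 1)) := by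
      intro k
      simp [hKdef, he, Finset.mem_filter, Finset.mem_range, Sym2.mem_iff]
    have hble : (degIn H i : ℝ) ≤ (b i : ℝ) := by exact_mod_cast hHdeg i
    have hind : ∑ e' ∈ S, indic H e' = (degIn H i : ℝ) := by
      unfold indic degIn
      rw [Finset.sum_boole]
      norm_cast
      congr 1
      ext e'
      simp only [hS, Finset.mem_filter]
      constructor
      · rintro ⟨⟨h1, h2⟩, h3⟩
        exact ⟨h3, h2⟩
      · rintro ⟨h1, h2⟩
        exact ⟨⟨hHsub h1, h2⟩, h1⟩
    have hsub : K.image e ⊆ S := by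
      intro e' he'
      obtain ⟨k, hk, hke⟩ := Finset.mem_image.mp he'
      rw [hKdef, Finset.mem_filter, Finset.mem_range] at hk
      rw [hS, Finset.mem_filter]
      exact ⟨hke ▸ hedge k hk.1, hke ▸ hk.2⟩
    have hzero : ∀ e' ∈ S, e' ∉ K.image e → x' e' - indic H e' = 0 := by
      intro e' he1 he2
      have hx : x' e' = indic H e' := by
        have hnot : ∀ k, k < d → e' ≠ e k := by
          intro k hk hek
          apply he2
          apply Finset.mem_image.mpr
          refine ⟨k, ?_, hek.symm⟩
          rw [hKdef, Finset.mem_filter, Finset.mem_range]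
          rw [hS, Finset.mem_filter] at he1
          exact ⟨hk, hek ▸ he1.2⟩
        have h1 : e' ∉ (Finset.Ico a d).image e := by
          intro hmem
          obtain ⟨k, hk, hke⟩ := Finset.mem_image.mp hmem
          exact hnot k (Finset.mem_Ico.mp hk).2 hke.symm
        have h2 : e' ∉ (Finset.range a).image e := by
          intro hmem
          obtain ⟨k, hk, hke⟩ := Finset.mem_image.mp hmem
          exact hnot k (by have := Finset.mem_range.mp hk; omega) hke.symm
        simp only [hx']
        rw [if_neg h1, if_neg h2]
      rw [hx]; ring
    have hred : ∑ e' ∈ S, (x' e' - indic H e') = ∑ k ∈ K, (x' (e k) - indic H (e k)) := by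
      rw [← Finset.sum_subset hsub hzero]
      apply Finset.sum_image
      intro k hk j hj hkj
      simp only [Finset.mem_coe, hKdef, Finset.mem_filter, Finset.mem_range] at hk hj
      exact heinj k j hk.1 hj.1 hkj
    have hsplit : ∑ e' ∈ S, x' e' = (degIn H i : ℝ) + ∑ k ∈ K, (x' (e k) - indic H (e k)) := by
      rw [← hred, ← hind, ← Finset.sum_add_distrib]
      apply Finset.sum_congr rfl
      intro e' _; ring
    rw [hsplit]
    -- evaluate x' on walk edges
    have hvalC : ∀ k, a ≤ k → k < d → x' (e k) = 1 / 2 := by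
      intro k h1 h2
      have : e k ∈ (Finset.Ico a d).image e :=
        Finset.mem_image_of_mem e (Finset.mem_Ico.mpr ⟨h1, h2⟩)
      simp only [hx']
      rw [if_pos this]
    have hvalP : ∀ k, k < a → x' (e k) = 1 - indic H (e k) := by
      intro k h1
      have h2 : e k ∉ (Finset.Ico a d).image e := by
        intro hmem
        obtain ⟨j, hj, hje⟩ := Finset.mem_image.mp hmem
        rw [Finset.mem_Ico] at hj
        have := heinj j k hj.2 (by omega) hje
        omega
      have h3 : e k ∈ (Finset.range a).image e :=
        Finset.mem_image_of_mem e (Finset.mem_range.mpr h1)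
      simp only [hx']
      rw [if_neg h2, if_pos h3]
    -- now case analysis on i
    by_cases hia : i = p a
    · by_cases haeq : a = d
      · -- no cycle; i = p a = p d, a = d > 0
        have ha0 : 0 < a := by omega
        have hK : K = {a - 1} := by
          ext k
          rw [hKmem, Finset.mem_singleton]
          constructor
          · rintro ⟨hkd, hk | hk⟩
            · rcases hpij k a (by omega) had (hia ▸ hk.symm) with h | ⟨h1, h2⟩ | ⟨h1, h2⟩ <;> omega
            · rcases hpij (k + 1) a (by omega) had (hia ▸ hk.symm) with h | ⟨h1, h2⟩ | ⟨h1, h2⟩ <;> omega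
          · rintro rfl
            refine ⟨by omega, Or.inr ?_⟩
            rw [hia]; congr 1; omega
        rw [hK, Finset.sum_singleton]
        have heH : e (a - 1) ∉ H := by
          have h1 := henda ha0
          have h2 : a - 1 + 1 = a := by omega
          simpa [he, h2] using h1
        rw [hvalP (a - 1) (by omega), hindic0 heH]
        have : (degIn H i : ℝ) + 1 ≤ (b i : ℝ) := by
          rw [hia]; exact_mod_cast hua
        linarith
      · -- with cycle: a < d, p a = p d = i
        have hald : a < d := by omega
        have ha3 : a + 3 ≤ d := han3 hald
        have hpd : i = p d := by rw [hia, hC hald]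
        have hKc : ∀ k, k ∈ K ↔ (k < d ∧ (k = a ∨ k + 1 = a ∨ k + 1 = d)) := by
          intro k
          rw [hKmem]
          constructor
          · rintro ⟨hkd, hk | hk⟩
            · rcases hpij k a (by omega) had (hia ▸ hk.symm) with h | ⟨h1, h2⟩ | ⟨h1, h2⟩ <;> omega
            · rcases hpij (k + 1) a (by omega) had (hia ▸ hk.symm) with h | ⟨h1, h2⟩ | ⟨h1, h2⟩ <;> omega
          · rintro ⟨hkd, hk | hk | hk⟩
            · exact ⟨hkd, Or.inl (by rw [hk, hia])⟩
            · exact ⟨hkd, Or.inr (by rw [hk, hia])⟩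
            · exact ⟨hkd, Or.inr (by rw [hk, hpd])⟩
        -- parity: e (d-1) ∈ H ↔ e a ∈ H
        have hparity : e (d - 1) ∈ H ↔ e a ∈ H := by
          have heven : Even (d - 1 - a) := by
            rcases hCodd with ⟨m, hm⟩ | h
            · exact ⟨m, by omega⟩
            · omega
          have := hpar (d - 1 - a) (by omega)
          have h3 : a + (d - 1 - a) = d - 1 := by omega
          rw [h3] at this
          rw [this]
          tauto
        by_cases ha0 : a = 0
        · -- K = {0, d-1}
          subst ha0
          have hK : K = {0, d - 1} := by
            ext k
            rw [hKc]
            simp only [Finset.mem_insert, Finset.mem_singleton]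
            omega
          rw [hK]
          rw [Finset.sum_insert (by simp; omega), Finset.sum_singleton]
          rw [hvalC 0 (by omega) (by omega), hvalC (d - 1) (by omega) (by omega)]
          have hd1 : (degIn H i : ℝ) + 1 ≤ (b i : ℝ) := by
            rw [hia]; exact_mod_cast hua
          by_cases hmem : e 0 ∈ H
          · rw [hindic1 hmem, hindic1 (hparity.mpr hmem)]
            linarith
          · rw [hindic0 hmem, hindic0 (fun h => hmem (hparity.mp h))]
            linarith
        · -- K = {a-1, a, d-1}
          have hK : K = {a - 1, a, d - 1} := by
            ext k
            rw [hKc]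
            simp only [Finset.mem_insert, Finset.mem_singleton]
            omega
          rw [hK]
          rw [Finset.sum_insert (by simp; omega), Finset.sum_insert (by simp; omega),
            Finset.sum_singleton]
          have heH : e (a - 1) ∉ H := by
            have h1 := henda (by omega)
            have h2 : a - 1 + 1 = a := by omega
            simpa [he, h2] using h1
          have heaH : e a ∈ H := by
            have h1 := halt' (a - 1) (by omega)
            have h2 : a - 1 + 1 = a := by omega
            rw [h2] at h1
            by_contra hcon
            exact heH (h1.mpr hcon)
          rw [hvalP (a - 1) (by omega), hvalC a (by omega) (by omega),
            hvalC (d - 1) (by omega) (by omega), hindic0 heH, hindic1 heaH,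
            hindic1 (hparity.mpr heaH)]
          linarith
    · -- i ≠ p a
      by_cases hex : ∃ t, t ≤ d ∧ p t = i
      · obtain ⟨t, htd, hti⟩ := hex
        have hta : t ≠ a := fun h => hia (h ▸ hti).symm
        have htd' : t < d := by
          rcases lt_or_eq_of_le htd with h | h
          · exact h
          · exfalso
            rcases eq_or_lt_of_le had with h2 | h2
            · omega
            · apply hia
              have h4 : i = p d := by rw [← hti, h]
              rw [h4, ← hC h2]
        by_cases ht0 : t = 0
        · subst ht0
          have ha0 : 0 < a := by omega
          have hK : K = {0} := by
            ext k
            rw [hKmem, Finset.mem_singleton]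
            constructor
            · rintro ⟨hkd, hk | hk⟩
              · rcases hpij k 0 (by omega) (by omega) (hti ▸ hk.symm) with h | ⟨h1, h2⟩ | ⟨h1, h2⟩ <;> omega
              · rcases hpij (k + 1) 0 (by omega) (by omega) (hti ▸ hk.symm) with h | ⟨h1, h2⟩ | ⟨h1, h2⟩ <;> omega
            · rintro rfl
              exact ⟨hd, Or.inl hti.symm⟩
          rw [hK, Finset.sum_singleton]
          have heH : e 0 ∉ H := by simpa [he] using hend0 ha0
          rw [hvalP 0 ha0, hindic0 heH]
          have : (degIn H i : ℝ) + 1 ≤ (b i : ℝ) := by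
            rw [← hti]; exact_mod_cast hu0
          linarith
        · have ht1 : 0 < t := by omega
          have hK : K = {t - 1, t} := by
            ext k
            rw [hKmem]
            simp only [Finset.mem_insert, Finset.mem_singleton]
            constructor
            · rintro ⟨hkd, hk | hk⟩
              · rcases hpij k t (by omega) (by omega) (hti ▸ hk.symm) with h | ⟨h1, h2⟩ | ⟨h1, h2⟩ <;> omega
              · rcases hpij (k + 1) t (by omega) (by omega) (hti ▸ hk.symm) with h | ⟨h1, h2⟩ | ⟨h1, h2⟩ <;> omega
            · rintro (rfl | rfl)
              · refine ⟨by omega, Or.inr ?_⟩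
                rw [← hti]; congr 1; omega
              · exact ⟨htd', Or.inl hti.symm⟩
          rw [hK, Finset.sum_insert (by simp; omega), Finset.sum_singleton]
          have hpairH : e (t - 1) ∈ H ↔ e t ∉ H := by
            have h1 := halt' (t - 1) (by omega)
            have h2 : t - 1 + 1 = t := by omega
            rwa [h2] at h1
          rcases lt_or_gt_of_ne hta with hlt | hgt
          · -- path interior
            rw [hvalP (t - 1) (by omega), hvalP t hlt]
            by_cases hmem : e (t - 1) ∈ H
            · rw [hindic1 hmem, hindic0 (hpairH.mp hmem)]
              linarith
            · rw [hindic0 hmem, hindic1 (by by_contra hcon; exact hmem (hpairH.mpr hcon))]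
              linarith
          · -- cycle interior
            rw [hvalC (t - 1) (by omega) (by omega), hvalC t (by omega) htd']
            by_cases hmem : e (t - 1) ∈ H
            · rw [hindic1 hmem, hindic0 (hpairH.mp hmem)]
              linarith
            · rw [hindic0 hmem, hindic1 (by by_contra hcon; exact hmem (hpairH.mpr hcon))]
              linarith
      · -- i not on the walk
        have hK : K = ∅ := by
          ext k
          rw [hKmem]
          simp only [Finset.notMem_empty, iff_false, not_and, not_or]
          intro hkd
          constructor
          · intro h; exact hex ⟨k, by omega, h.symm⟩
          · intro h; exact hex ⟨k + 1, by omega, h.symm⟩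
        rw [hK, Finset.sum_empty]
        linarith
end
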